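/- arXiv:2003.10320 — 3 statements merged into one kernel-verified Lean document; each statement's English description precedes it below -/
import Mathlib

section
/- Let A ⊆ B ⊊ V(G) with A nonempty and let x ∈ A. Set a := min_{y ∈ ∂A} gr_B(x,y), b := max_{y ∈ ∂A} gr_B(x,y), and δ := max{|gr_B(x,u) − gr_B(x,v)| : u, v ∈ B, u adjacent to v} (taken to be 0 if B contains no edge). Then a²/(a + δ) ≤ R(A ↔ V(G)∖B) ≤ b + δ. -/
open Finset

set_option linter.unusedSectionVars false
noncomputable section
open scoped Classical

variable {V : Type*}

/-- Transition matrix of the simple random walk on `G`. -/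
def walkP [Fintype V] (G : SimpleGraph V) [DecidableRel G.Adj] : Matrix V V ℝ :=
  Matrix.of fun u v => if G.Adj u v then 1 / (G.degree u : ℝ) else 0

/-- Transition matrix of the walk killed upon exiting `B`. -/
def walkQ [Fintype V] (G : SimpleGraph V) [DecidableRel G.Adj] (B : Set V) :
    Matrix V V ℝ :=
  Matrix.of fun u v => if u ∈ B ∧ v ∈ B then walkP G u v else 0

/-- Green's function of the walk killed upon exiting `B`:
`Gr_B(x,y) = ∑_{n ≥ 0} (Q_B^n)(x,y)`. -/
def GreenFn [Fintype V] [DecidableEq V] (G : SimpleGraph V) [DecidableRel G.Adj]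
    (B : Set V) (x y : V) : ℝ :=
  ∑' n : ℕ, (walkQ G B ^ n) x y

/-- Normalized Green's function `gr_B(x,y) = Gr_B(x,y) / deg(y)`. -/
def grFn [Fintype V] [DecidableEq V] (G : SimpleGraph V) [DecidableRel G.Adj]
    (B : Set V) (x y : V) : ℝ :=
  GreenFn G B x y / (G.degree y : ℝ)

/-- Dirichlet energy of `f : V(G) → ℝ`, a sum over unoriented edges. -/
def dirEnergy [Fintype V] [DecidableEq V] (G : SimpleGraph V) [DecidableRel G.Adj]
    (f : V → ℝ) : ℝ :=
  ∑ e ∈ G.edgeFinset, Sym2.lift ⟨fun u v => (f u - f v) ^ 2, fun u v => by ring⟩ e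

/-- Effective resistance between `W` and `Z`, via Dirichlet's principle. -/
def effRes [Fintype V] [DecidableEq V] (G : SimpleGraph V) [DecidableRel G.Adj]
    (W Z : Set V) : ℝ :=
  (sInf {E : ℝ | ∃ f : V → ℝ, (∀ w ∈ W, f w = 1) ∧ (∀ z ∈ Z, f z = 0) ∧ E = dirEnergy G f})⁻¹

section Comb

variable [Fintype V] [DecidableEq V] {G : SimpleGraph V} [DecidableRel G.Adj]

/-- discrete Laplacian -/
def lap (G : SimpleGraph V) [Fintype V] [DecidableRel G.Adj] (h : V → ℝ) (y : V) : ℝ :=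
  (G.degree y : ℝ) * h y - ∑ v ∈ G.neighborFinset y, h v

lemma lap_eq (h : V → ℝ) (y : V) :
    lap G h y = ∑ v ∈ G.neighborFinset y, (h y - h v) := by
  rw [lap, Finset.sum_sub_distrib, Finset.sum_const, SimpleGraph.card_neighborFinset_eq_degree,
    nsmul_eq_mul]

lemma sum_nbhd_swap (F : V → V → ℝ) :
    ∑ y, ∑ v ∈ G.neighborFinset y, F y v = ∑ y, ∑ v ∈ G.neighborFinset y, F v y := by
  exact Finset.sum_comm' (by
    intro x y
    simp [SimpleGraph.mem_neighborFinset, G.adj_comm])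

lemma twice_edge_sum (F : V → V → ℝ) (hsym : ∀ u v, F u v = F v u) :
    ∑ y, ∑ v ∈ G.neighborFinset y, F y v
      = 2 * ∑ e ∈ G.edgeFinset, Sym2.lift ⟨F, hsym⟩ e := by
  classical
  have h1 : ∑ y, ∑ v ∈ G.neighborFinset y, F y v
      = ∑ p ∈ (Finset.univ ×ˢ Finset.univ).filter (fun p : V × V => G.Adj p.1 p.2),
          F p.1 p.2 := by
    rw [Finset.sum_filter, Finset.sum_product]
    refine Finset.sum_congr rfl fun y _ => ?_
    rw [SimpleGraph.neighborFinset_eq_filter, Finset.sum_filter]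
  rw [h1]
  have hmaps : ∀ p ∈ (Finset.univ ×ˢ Finset.univ).filter (fun p : V × V => G.Adj p.1 p.2),
      Sym2.mk p.1 p.2 ∈ G.edgeFinset := by
    rintro ⟨u, v⟩ hp
    simp only [Finset.mem_filter] at hp
    simpa [SimpleGraph.mem_edgeFinset] using hp.2
  rw [← Finset.sum_fiberwise_of_maps_to hmaps (fun p : V × V => F p.1 p.2)]
  rw [Finset.mul_sum]
  refine Finset.sum_congr rfl fun e he => ?_
  induction e with
  | _ a b =>
    have hab : G.Adj a b := by simpa [SimpleGraph.mem_edgeFinset] using he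
    have hfib : ((Finset.univ ×ˢ Finset.univ).filter
        (fun p : V × V => G.Adj p.1 p.2)).filter (fun p => Sym2.mk p.1 p.2 = s(a, b))
        = {(a, b), (b, a)} := by
      ext ⟨u, v⟩
      simp only [Finset.mem_filter, Finset.mem_product, Finset.mem_univ, true_and,
        Finset.mem_insert, Finset.mem_singleton, Sym2.eq_iff, Prod.mk.injEq]
      constructor
      · rintro ⟨-, h | h⟩
        · exact Or.inl ⟨h.1, h.2⟩
        · exact Or.inr ⟨h.1, h.2⟩
      · rintro (⟨rfl, rfl⟩ | ⟨rfl, rfl⟩)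
        · exact ⟨hab, Or.inl ⟨rfl, rfl⟩⟩
        · exact ⟨hab.symm, Or.inr ⟨rfl, rfl⟩⟩
    rw [hfib]
    have hne : ((a, b) : V × V) ≠ (b, a) := by
      intro h
      exact hab.ne (congrArg Prod.fst h)
    rw [Finset.sum_insert (by simpa using hne), Finset.sum_singleton, Sym2.lift_mk]
    simp only
    rw [hsym b a]
    ring

lemma pair_energy (f h : V → ℝ) :
    ∑ e ∈ G.edgeFinset,
        Sym2.lift ⟨fun u v => (f u - f v) * (h u - h v), fun u v => by ring⟩ e
      = ∑ y, h y * lap G f y := by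
  have key := twice_edge_sum (G := G) (fun u v => (f u - f v) * (h u - h v))
    (fun u v => by ring)
  have expand : ∑ y, ∑ v ∈ G.neighborFinset y, (f y - f v) * (h y - h v)
      = 2 * ∑ y, h y * lap G f y := by
    have swap : ∑ y, ∑ v ∈ G.neighborFinset y, h v * (f y - f v)
        = - ∑ y, ∑ v ∈ G.neighborFinset y, h y * (f y - f v) := by
      rw [sum_nbhd_swap (fun y v => h v * (f y - f v))]
      rw [← Finset.sum_neg_distrib]
      refine Finset.sum_congr rfl fun y _ => ?_
      rw [← Finset.sum_neg_distrib]
      refine Finset.sum_congr rfl fun v _ => by ring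
    have e1 : ∑ y, ∑ v ∈ G.neighborFinset y, (f y - f v) * (h y - h v)
        = (∑ y, ∑ v ∈ G.neighborFinset y, h y * (f y - f v))
          - ∑ y, ∑ v ∈ G.neighborFinset y, h v * (f y - f v) := by
      rw [← Finset.sum_sub_distrib]
      refine Finset.sum_congr rfl fun y _ => ?_
      rw [← Finset.sum_sub_distrib]
      refine Finset.sum_congr rfl fun v _ => by ring
    rw [e1, swap]
    have e2 : ∀ y, ∑ v ∈ G.neighborFinset y, h y * (f y - f v) = h y * lap G f y := by
      intro y
      rw [lap_eq, Finset.mul_sum]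
    simp_rw [e2]
    ring
  rw [expand] at key
  linarith

lemma dirEnergy_eq (f : V → ℝ) : dirEnergy G f = ∑ y, f y * lap G f y := by
  rw [dirEnergy, ← pair_energy f f]
  refine Finset.sum_congr rfl fun e _ => ?_
  induction e with
  | _ a b => rw [Sym2.lift_mk, Sym2.lift_mk]; ring

lemma dirEnergy_nonneg (f : V → ℝ) : 0 ≤ dirEnergy G f := by
  refine Finset.sum_nonneg fun e _ => ?_
  induction e with
  | _ a b => rw [Sym2.lift_mk]; positivity

/-- Internal edges cancel: the total Laplacian over `S` is a sum over the edge
boundary of `S`. -/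
lemma sum_lap_boundary (S : Finset V) (h : V → ℝ) :
    ∑ y ∈ S, lap G h y
      = ∑ y ∈ S, ∑ v ∈ (G.neighborFinset y).filter (fun v => v ∉ S), (h y - h v) := by
  have split : ∀ y, lap G h y
      = (∑ v ∈ (G.neighborFinset y).filter (fun v => v ∈ S), (h y - h v))
        + ∑ v ∈ (G.neighborFinset y).filter (fun v => v ∉ S), (h y - h v) := by
    intro y
    rw [lap_eq, Finset.sum_filter_add_sum_filter_not]
  have cancel : ∑ y ∈ S, ∑ v ∈ (G.neighborFinset y).filter (fun v => v ∈ S), (h y - h v)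
      = 0 := by
    have hswap : ∑ y ∈ S, ∑ v ∈ (G.neighborFinset y).filter (fun v => v ∈ S), (h y - h v)
        = ∑ y ∈ S, ∑ v ∈ (G.neighborFinset y).filter (fun v => v ∈ S), (h v - h y) :=
      Finset.sum_comm' (by
        intro y v
        simp only [Finset.mem_filter, SimpleGraph.mem_neighborFinset]
        rw [G.adj_comm]
        tauto)
    have : ∑ y ∈ S, ∑ v ∈ (G.neighborFinset y).filter (fun v => v ∈ S), (h v - h y)
        = - ∑ y ∈ S, ∑ v ∈ (G.neighborFinset y).filter (fun v => v ∈ S), (h y - h v) := by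
      rw [← Finset.sum_neg_distrib]
      refine Finset.sum_congr rfl fun y _ => ?_
      rw [← Finset.sum_neg_distrib]
      exact Finset.sum_congr rfl fun v _ => by ring
    rw [this] at hswap
    linarith
  simp_rw [split, Finset.sum_add_distrib, cancel, zero_add]

end Comb

section Harm

variable [Fintype V] [DecidableEq V] {G : SimpleGraph V} [DecidableRel G.Adj]
variable {B A : Set V} {x : V} {g : V → ℝ} {c : ℝ}

lemma lap_g_eq (hgh : ∀ y ∈ B, (G.degree y : ℝ) * g y
      = (if y = x then 1 else 0) + ∑ v ∈ G.neighborFinset y, g v) :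
    ∀ y ∈ B, lap G g y = if y = x then 1 else 0 := by
  intro y hy
  rw [lap, hgh y hy]
  ring

lemma flux_one (hgh : ∀ y ∈ B, (G.degree y : ℝ) * g y
      = (if y = x then 1 else 0) + ∑ v ∈ G.neighborFinset y, g v)
    (S : Finset V) (hS : ∀ y ∈ S, y ∈ B) (hxS : x ∈ S) :
    ∑ y ∈ S, lap G g y = 1 := by
  have : ∑ y ∈ S, lap G g y = ∑ y ∈ S, if y = x then (1 : ℝ) else 0 :=
    Finset.sum_congr rfl fun y hy => lap_g_eq hgh y (hS y hy)
  rw [this, Finset.sum_ite_eq' S x (fun _ => (1 : ℝ)), if_pos hxS]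

lemma lap_min_nonneg (hg0 : ∀ y, 0 ≤ g y)
    (hgh : ∀ y ∈ B, (G.degree y : ℝ) * g y
      = (if y = x then 1 else 0) + ∑ v ∈ G.neighborFinset y, g v)
    (hc : 0 ≤ c) :
    ∀ y ∈ B, 0 ≤ lap G (fun v => min (g v) c) y := by
  intro y hy
  rw [lap]
  rcases le_or_gt (g y) c with h | h
  · have h1 : min (g y) c = g y := min_eq_left h
    have h2 : ∑ v ∈ G.neighborFinset y, min (g v) c ≤ ∑ v ∈ G.neighborFinset y, g v :=
      Finset.sum_le_sum fun v _ => min_le_left _ _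
    have h3 := hgh y hy
    have h4 : (0 : ℝ) ≤ if y = x then 1 else 0 := by positivity
    simp only [h1]
    linarith
  · have h1 : min (g y) c = c := min_eq_right h.le
    have h2 : ∑ v ∈ G.neighborFinset y, min (g v) c
        ≤ ∑ v ∈ G.neighborFinset y, c :=
      Finset.sum_le_sum fun v _ => min_le_right _ _
    rw [Finset.sum_const, SimpleGraph.card_neighborFinset_eq_degree, nsmul_eq_mul] at h2
    simp only [h1]
    linarith

lemma flux_min_le_one (hg0 : ∀ y, 0 ≤ g y) (hgB : ∀ y, y ∉ B → g y = 0)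
    (hgh : ∀ y ∈ B, (G.degree y : ℝ) * g y
      = (if y = x then 1 else 0) + ∑ v ∈ G.neighborFinset y, g v)
    (hxB : x ∈ B) (hc : 0 ≤ c) :
    ∑ y ∈ B.toFinset, lap G (fun v => min (g v) c) y ≤ 1 := by
  rw [sum_lap_boundary]
  have hle : ∑ y ∈ B.toFinset, ∑ v ∈ (G.neighborFinset y).filter
        (fun v => v ∉ B.toFinset), (min (g y) c - min (g v) c)
      ≤ ∑ y ∈ B.toFinset, ∑ v ∈ (G.neighborFinset y).filter
        (fun v => v ∉ B.toFinset), (g y - g v) := by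
    refine Finset.sum_le_sum fun y _ => Finset.sum_le_sum fun v hv => ?_
    have hvB : v ∉ B := by
      rcases Finset.mem_filter.1 hv with ⟨-, h⟩
      simpa [Set.mem_toFinset] using h
    have : min (g v) c = g v := by rw [hgB v hvB]; exact min_eq_left hc
    rw [this]
    have := min_le_left (g y) c
    linarith
  calc _ ≤ _ := hle
    _ = ∑ y ∈ B.toFinset, lap G g y := (sum_lap_boundary _ _).symm
    _ = 1 := flux_one hgh _ (fun y hy => Set.mem_toFinset.1 hy) (Set.mem_toFinset.2 hxB)

lemma energy_min_le (hg0 : ∀ y, 0 ≤ g y) (hgB : ∀ y, y ∉ B → g y = 0)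
    (hgh : ∀ y ∈ B, (G.degree y : ℝ) * g y
      = (if y = x then 1 else 0) + ∑ v ∈ G.neighborFinset y, g v)
    (hxB : x ∈ B) (hc : 0 ≤ c) :
    dirEnergy G (fun y => min (g y) c) ≤ c := by
  rw [dirEnergy_eq]
  have h0 : ∑ y, min (g y) c * lap G (fun v => min (g v) c) y
      = ∑ y ∈ B.toFinset, min (g y) c * lap G (fun v => min (g v) c) y := by
    refine (Finset.sum_subset (Finset.subset_univ _) ?_).symm
    intro y _ hy
    have : g y = 0 := hgB y (by simpa [Set.mem_toFinset] using hy)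
    rw [this, min_eq_left hc, zero_mul]
  rw [h0]
  have h1 : ∑ y ∈ B.toFinset, min (g y) c * lap G (fun v => min (g v) c) y
      ≤ ∑ y ∈ B.toFinset, c * lap G (fun v => min (g v) c) y := by
    refine Finset.sum_le_sum fun y hy => ?_
    exact mul_le_mul_of_nonneg_right (min_le_right _ _)
      (lap_min_nonneg hg0 hgh hc y (Set.mem_toFinset.1 hy))
  have h2 : ∑ y ∈ B.toFinset, c * lap G (fun v => min (g v) c) y
      = c * ∑ y ∈ B.toFinset, lap G (fun v => min (g v) c) y := by
    rw [Finset.mul_sum]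
  have h3 := flux_min_le_one hg0 hgB hgh hxB hc
  calc _ ≤ _ := h1
    _ = _ := h2
    _ ≤ c * 1 := mul_le_mul_of_nonneg_left h3 hc
    _ = c := mul_one c

lemma min_principle (hG : G.Connected)
    (hgh : ∀ y ∈ B, (G.degree y : ℝ) * g y
      = (if y = x then 1 else 0) + ∑ v ∈ G.neighborFinset y, g v)
    (hAB : A ⊆ B) (hB : B ≠ Set.univ) (hx : x ∈ A) :
    ∀ y ∈ A, ∃ z, (z ∈ A ∧ ∃ t, t ∉ A ∧ G.Adj z t) ∧ g z ≤ g y := by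
  obtain ⟨y₀, hy₀A, hy₀min⟩ :=
    Finset.exists_min_image A.toFinset g ⟨x, Set.mem_toFinset.2 hx⟩
  have hy₀min' : ∀ z ∈ A, g y₀ ≤ g z := fun z hz => hy₀min z (Set.mem_toFinset.2 hz)
  set m := g y₀ with hm
  by_cases hbd : ∃ z, (z ∈ A ∧ g z ≤ m) ∧ ∃ t, t ∉ A ∧ G.Adj z t
  · obtain ⟨z, ⟨hzA, hzm⟩, ht⟩ := hbd
    exact fun y hy => ⟨z, ⟨hzA, ht⟩, hzm.trans (hy₀min' y hy)⟩
  · exfalso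
    push_neg at hbd
    -- T := {z | z ∈ A ∧ g z ≤ m} is closed under adjacency
    have closure : ∀ z, (z ∈ A ∧ g z ≤ m) → ∀ v, G.Adj z v → (v ∈ A ∧ g v ≤ m) := by
      rintro z ⟨hzA, hzm⟩ v hadj
      have hnbrA : ∀ u, G.Adj z u → u ∈ A := by
        intro u hu
        by_contra hcon
        exact absurd hu (by simpa using (hbd z ⟨hzA, hzm⟩) u hcon)
      have hnbr_ge : ∑ u ∈ G.neighborFinset z, m ≤ ∑ u ∈ G.neighborFinset z, g u := by
        refine Finset.sum_le_sum fun u hu => ?_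
        exact hy₀min' u (hnbrA u ((SimpleGraph.mem_neighborFinset _ _ _).1 hu))
      rw [Finset.sum_const, SimpleGraph.card_neighborFinset_eq_degree, nsmul_eq_mul] at hnbr_ge
      have hzB : z ∈ B := hAB hzA
      have hh := hgh z hzB
      have hdegm : (G.degree z : ℝ) * g z ≤ (G.degree z : ℝ) * m :=
        mul_le_mul_of_nonneg_left hzm (by positivity)
      have hzx : z ≠ x := by
        intro h
        rw [if_pos h] at hh
        linarith
      rw [if_neg hzx, zero_add] at hh
      -- all neighbor values equal m
      have hsum0 : ∑ u ∈ G.neighborFinset z, (g u - m) = 0 := by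
        have h1 : ∑ u ∈ G.neighborFinset z, (g u - m)
            = (∑ u ∈ G.neighborFinset z, g u) - (G.degree z : ℝ) * m := by
          rw [Finset.sum_sub_distrib, Finset.sum_const,
            SimpleGraph.card_neighborFinset_eq_degree, nsmul_eq_mul]
        have h2 : (0:ℝ) ≤ ∑ u ∈ G.neighborFinset z, (g u - m) := by
          rw [h1]; linarith
        have h3 : ∑ u ∈ G.neighborFinset z, (g u - m) ≤ 0 := by
          rw [h1]; linarith
        linarith
      have hveq : g v - m = 0 := by
        have := (Finset.sum_eq_zero_iff_of_nonneg
          (fun u hu => by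
            have : g u ≥ m := hy₀min' u (hnbrA u ((SimpleGraph.mem_neighborFinset _ _ _).1 hu))
            linarith)).1 hsum0 v ((SimpleGraph.mem_neighborFinset _ _ _).2 hadj)
        exact this
      exact ⟨hnbrA v hadj, by linarith⟩
    have walkprop : ∀ ⦃u w : V⦄ (p : G.Walk u w), (u ∈ A ∧ g u ≤ m) → (w ∈ A ∧ g w ≤ m) := by
      intro u w p
      induction p with
      | nil => exact id
      | cons h q ih => exact fun hu => ih (closure _ hu _ h)
    obtain ⟨z, hz⟩ := Set.ne_univ_iff_exists_notMem B |>.1 hB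
    have hzT := walkprop ((hG.preconnected y₀ z).some) ⟨Set.mem_toFinset.1 hy₀A, le_refl m⟩
    exact hz (hAB hzT.1)

end Harm

section Green

variable [Fintype V] [DecidableEq V] {G : SimpleGraph V} [DecidableRel G.Adj] {B : Set V}

lemma degree_pos_of_connected (hG : G.Connected) (hV : 2 ≤ Fintype.card V) (v : V) :
    0 < G.degree v := by
  obtain ⟨w, hw⟩ := Fintype.exists_ne_of_one_lt_card (by omega) v
  have hr := hG.preconnected v w
  obtain ⟨p⟩ := hr
  cases p with
  | nil => exact absurd rfl hw
  | cons h q => exact (G.degree_pos_iff_exists_adj v).2 ⟨_, h⟩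

lemma walkP_nonneg (u v : V) : 0 ≤ walkP G u v := by
  rw [walkP, Matrix.of_apply]
  split <;> positivity

lemma walkQ_nonneg (u v : V) : 0 ≤ walkQ G B u v := by
  rw [walkQ, Matrix.of_apply]
  split
  · exact walkP_nonneg u v
  · exact le_refl 0

lemma walkQ_le_walkP (u v : V) : walkQ G B u v ≤ walkP G u v := by
  rw [walkQ, Matrix.of_apply]
  split
  · exact le_refl _
  · exact walkP_nonneg u v

lemma sum_walkP_eq_one {u : V} (h : 0 < G.degree u) : ∑ v, walkP G u v = 1 := by
  have : ∑ v, walkP G u v = ∑ v ∈ G.neighborFinset u, 1 / (G.degree u : ℝ) := by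
    rw [SimpleGraph.neighborFinset_eq_filter, Finset.sum_filter]
    rfl
  rw [this, Finset.sum_const, SimpleGraph.card_neighborFinset_eq_degree, nsmul_eq_mul]
  field_simp

lemma sum_walkQ_le_one {u : V} (h : 0 < G.degree u) : ∑ v, walkQ G B u v ≤ 1 := by
  calc ∑ v, walkQ G B u v ≤ ∑ v, walkP G u v :=
        Finset.sum_le_sum fun v _ => walkQ_le_walkP u v
    _ = 1 := sum_walkP_eq_one h

lemma walkQ_pow_nonneg (n : ℕ) (u v : V) : 0 ≤ (walkQ G B ^ n) u v := by
  induction n generalizing u v with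
  | zero =>
    rw [pow_zero, Matrix.one_apply]
    split <;> norm_num
  | succ n ih =>
    rw [pow_succ, Matrix.mul_apply]
    exact Finset.sum_nonneg fun w _ => mul_nonneg (ih u w) (walkQ_nonneg w v)

/-- row sums of `Q^n`. -/
def qrs (G : SimpleGraph V) [DecidableRel G.Adj] (B : Set V) (n : ℕ) (u : V) : ℝ :=
  ∑ y, (walkQ G B ^ n) u y

lemma qrs_nonneg (n : ℕ) (u : V) : 0 ≤ qrs G B n u :=
  Finset.sum_nonneg fun y _ => walkQ_pow_nonneg n u y

lemma qrs_zero (u : V) : qrs G B 0 u = 1 := by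
  rw [qrs]
  simp [Matrix.one_apply]

lemma qrs_succ (n : ℕ) (u : V) :
    qrs G B (n + 1) u = ∑ v, walkQ G B u v * qrs G B n v := by
  rw [qrs]
  simp_rw [pow_succ', Matrix.mul_apply]
  rw [Finset.sum_comm]
  simp_rw [qrs, Finset.mul_sum]

lemma qrs_add (k m : ℕ) (u : V) :
    qrs G B (k + m) u = ∑ v, (walkQ G B ^ k) u v * qrs G B m v := by
  rw [qrs]
  simp_rw [pow_add, Matrix.mul_apply]
  rw [Finset.sum_comm]
  simp_rw [qrs, Finset.mul_sum]

lemma qrs_le_one (hdeg : ∀ v, 0 < G.degree v) (n : ℕ) (u : V) : qrs G B n u ≤ 1 := by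
  induction n generalizing u with
  | zero => rw [qrs_zero]
  | succ n ih =>
    rw [qrs_succ]
    calc ∑ v, walkQ G B u v * qrs G B n v ≤ ∑ v, walkQ G B u v := by
          refine Finset.sum_le_sum fun v _ => ?_
          exact mul_le_of_le_one_right (walkQ_nonneg u v) (ih v)
      _ ≤ 1 := sum_walkQ_le_one (hdeg u)

lemma qrs_succ_le (hdeg : ∀ v, 0 < G.degree v) (n : ℕ) (u : V) :
    qrs G B (n + 1) u ≤ qrs G B n u := by
  induction n generalizing u with
  | zero =>
    rw [qrs_zero, qrs_succ]
    calc ∑ v, walkQ G B u v * qrs G B 0 v = ∑ v, walkQ G B u v := by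
          simp [qrs_zero]
      _ ≤ 1 := sum_walkQ_le_one (hdeg u)
  | succ n ih =>
    rw [qrs_succ, qrs_succ]
    exact Finset.sum_le_sum fun v _ =>
      mul_le_mul_of_nonneg_left (ih v) (walkQ_nonneg u v)

lemma qrs_antitone (hdeg : ∀ v, 0 < G.degree v) (u : V) :
    Antitone (fun n => qrs G B n u) :=
  antitone_nat_of_succ_le fun n => qrs_succ_le hdeg n u

lemma qrs_off {u : V} (hu : u ∉ B) (n : ℕ) : qrs G B (n + 1) u = 0 := by
  rw [qrs_succ]
  refine Finset.sum_eq_zero fun v _ => ?_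
  have : walkQ G B u v = 0 := by
    rw [walkQ, Matrix.of_apply, if_neg (fun h => hu h.1)]
  rw [this, zero_mul]

lemma qrs_lt_one (hdeg : ∀ v, 0 < G.degree v) :
    ∀ n : ℕ, ∀ u z : V, ∀ p : G.Walk u z, u ∈ B → z ∉ B → p.length ≤ n →
      qrs G B n u < 1 := by
  intro n
  induction n with
  | zero =>
    intro u z p hu hz hlen
    cases p with
    | nil => exact absurd hu hz
    | cons h q => simp at hlen
  | succ n ih =>
    intro u z p hu hz hlen
    cases p with
    | nil => exact absurd hu hz
    | @cons _ u' _ h q =>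
      have hq : q.length ≤ n := by
        simp only [SimpleGraph.Walk.length_cons] at hlen
        omega
      have hPpos : 0 < walkP G u u' := by
        rw [walkP, Matrix.of_apply, if_pos h]
        have := hdeg u
        positivity
      rw [qrs_succ]
      rw [← Finset.add_sum_erase _ _ (Finset.mem_univ u')]
      have herase_le : ∑ v ∈ Finset.univ.erase u', walkQ G B u v * qrs G B n v
          ≤ ∑ v ∈ Finset.univ.erase u', walkQ G B u v :=
        Finset.sum_le_sum fun v _ =>
          mul_le_of_le_one_right (walkQ_nonneg u v) (qrs_le_one hdeg n v)
      by_cases hu' : u' ∈ B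
      · have hlt := ih u' z q hu' hz hq
        have hQpos : 0 < walkQ G B u u' := by
          rw [walkQ, Matrix.of_apply, if_pos ⟨hu, hu'⟩]
          exact hPpos
        have hsum : ∑ v ∈ Finset.univ.erase u', walkQ G B u v
            = (∑ v, walkQ G B u v) - walkQ G B u u' := by
          rw [← Finset.add_sum_erase _ _ (Finset.mem_univ u')]
          ring
        have h1 : ∑ v, walkQ G B u v ≤ 1 := sum_walkQ_le_one (hdeg u)
        have h2 : qrs G B n u' ≤ 1 := qrs_le_one hdeg n u'
        nlinarith [qrs_nonneg (G := G) (B := B) n u']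
      · have hQ0 : walkQ G B u u' = 0 := by
          rw [walkQ, Matrix.of_apply, if_neg (fun hh => hu' hh.2)]
        have herase_leP : ∑ v ∈ Finset.univ.erase u', walkQ G B u v
            ≤ ∑ v ∈ Finset.univ.erase u', walkP G u v :=
          Finset.sum_le_sum fun v _ => walkQ_le_walkP u v
        have hsumP : ∑ v ∈ Finset.univ.erase u', walkP G u v
            = 1 - walkP G u u' := by
          have := sum_walkP_eq_one (G := G) (hdeg u)
          rw [← Finset.add_sum_erase _ _ (Finset.mem_univ u')] at this
          linarith
        have h0 : walkQ G B u u' * qrs G B n u' = 0 := by rw [hQ0, zero_mul]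
        rw [h0, zero_add]
        calc ∑ v ∈ Finset.univ.erase u', walkQ G B u v * qrs G B n v
            ≤ ∑ v ∈ Finset.univ.erase u', walkQ G B u v := herase_le
          _ ≤ 1 - walkP G u u' := by rw [← hsumP]; exact herase_leP
          _ < 1 := by linarith

lemma qrs_card_lt_one (hdeg : ∀ v, 0 < G.degree v) (hG : G.Preconnected)
    (hB : B ≠ Set.univ) (u : V) (hu : u ∈ B) :
    qrs G B (Fintype.card V) u < 1 := by
  obtain ⟨z, hz⟩ := Set.ne_univ_iff_exists_notMem B |>.1 hB
  obtain ⟨p⟩ := hG u z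
  exact qrs_lt_one hdeg _ u z p.toPath.1 hu hz (Nat.le_of_lt p.toPath.2.length_lt)

theorem green_summable (hdeg : ∀ v, 0 < G.degree v) (hG : G.Preconnected)
    (hB : B ≠ Set.univ) (x y : V) :
    Summable fun n => (walkQ G B ^ n) x y := by
  have hVne : (Finset.univ : Finset V).Nonempty := ⟨x, Finset.mem_univ x⟩
  set N := Fintype.card V with hN
  have hNpos : 0 < N := Fintype.card_pos_iff.2 ⟨x⟩
  have hUlt : ∀ u, qrs G B N u < 1 := by
    intro u
    by_cases hu : u ∈ B
    · exact qrs_card_lt_one hdeg hG hB u hu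
    · obtain ⟨n, hn⟩ : ∃ n, N = n + 1 := ⟨N - 1, by omega⟩
      rw [hn, qrs_off hu]
      norm_num
  set c := Finset.univ.sup' hVne (fun u => qrs G B N u) with hc
  have hc1 : c < 1 := (Finset.sup'_lt_iff hVne).2 fun u _ => hUlt u
  have hc0 : (0 : ℝ) ≤ c :=
    le_trans (qrs_nonneg N x) (Finset.le_sup' _ (Finset.mem_univ x))
  have hqc : ∀ u, qrs G B N u ≤ c := fun u => Finset.le_sup' _ (Finset.mem_univ u)
  set t := fun n => Finset.univ.sup' hVne (fun u => qrs G B n u) with ht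
  have ht_ub : ∀ n u, qrs G B n u ≤ t n := fun n u => Finset.le_sup' _ (Finset.mem_univ u)
  have ht0 : ∀ n, 0 ≤ t n := fun n => le_trans (qrs_nonneg n x) (ht_ub n x)
  have hstep : ∀ m u, qrs G B (N + m) u ≤ c * t m := by
    intro m u
    rw [qrs_add]
    calc ∑ v, (walkQ G B ^ N) u v * qrs G B m v
        ≤ ∑ v, (walkQ G B ^ N) u v * t m :=
          Finset.sum_le_sum fun v _ =>
            mul_le_mul_of_nonneg_left (ht_ub m v) (walkQ_pow_nonneg N u v)
      _ = qrs G B N u * t m := by rw [← Finset.sum_mul]; rfl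
      _ ≤ c * t m := mul_le_mul_of_nonneg_right (hqc u) (ht0 m)
  have htstep : ∀ m, t (N + m) ≤ c * t m := fun m =>
    Finset.sup'_le hVne _ fun u _ => hstep m u
  have htpow : ∀ k, t (N * k) ≤ c ^ k := by
    intro k
    induction k with
    | zero =>
      simp only [Nat.mul_zero, pow_zero]
      exact Finset.sup'_le hVne _ fun u _ => qrs_le_one hdeg 0 u
    | succ k ih =>
      have : N * (k + 1) = N + N * k := by ring
      rw [this, pow_succ]
      calc t (N + N * k) ≤ c * t (N * k) := htstep (N * k)
        _ ≤ c * c ^ k := mul_le_mul_of_nonneg_left ih hc0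
        _ = c ^ k * c := by ring
  have htanti : Antitone t := antitone_nat_of_succ_le fun n =>
    Finset.sup'_le hVne _ fun u _ => (qrs_succ_le hdeg n u).trans (ht_ub n u)
  have hbound : ∀ n, t n ≤ c ^ (n / N) := by
    intro n
    have h1 : N * (n / N) ≤ n := by
      rw [Nat.mul_comm]
      exact Nat.div_mul_le_self n N
    exact le_trans (htanti h1) (htpow (n / N))
  have hpows : ∀ mm, ∑ i ∈ Finset.range (N * mm), c ^ (i / N)
      = ∑ k ∈ Finset.range mm, (N : ℝ) * c ^ k := by
    intro mm
    induction mm with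
    | zero => simp
    | succ mm ih =>
      have h1 : N * (mm + 1) = N * mm + N := by ring
      rw [h1, Finset.sum_range_add, ih, Finset.sum_range_succ]
      congr 1
      have : ∀ i ∈ Finset.range N, c ^ ((N * mm + i) / N) = c ^ mm := by
        intro i hi
        congr 1
        rw [Nat.mul_add_div hNpos]
        rw [Nat.div_eq_of_lt (Finset.mem_range.1 hi)]
        omega
      rw [Finset.sum_congr rfl this, Finset.sum_const, Finset.card_range, nsmul_eq_mul]
  have hgeom : ∀ mm, ∑ k ∈ Finset.range mm, c ^ k ≤ (1 - c)⁻¹ := by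
    intro mm
    have h1 : (∑ k ∈ Finset.range mm, c ^ k) * (c - 1) = c ^ mm - 1 := geom_sum_mul c mm
    have h2 : (0:ℝ) ≤ c ^ mm := pow_nonneg hc0 mm
    have h3 : (0:ℝ) < 1 - c := by linarith
    have h4 : (∑ k ∈ Finset.range mm, c ^ k) * (1 - c) ≤ 1 := by nlinarith
    calc ∑ k ∈ Finset.range mm, c ^ k
        = (∑ k ∈ Finset.range mm, c ^ k) * (1 - c) * (1 - c)⁻¹ := by
          field_simp
      _ ≤ 1 * (1 - c)⁻¹ := by
          exact mul_le_mul_of_nonneg_right h4 (by positivity)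
      _ = (1 - c)⁻¹ := one_mul _
  refine summable_of_sum_range_le (c := (N : ℝ) * (1 - c)⁻¹)
    (fun n => walkQ_pow_nonneg n x y) ?_
  intro n
  have hc1' : (0:ℝ) < 1 - c := by linarith
  calc ∑ i ∈ Finset.range n, (walkQ G B ^ i) x y
      ≤ ∑ i ∈ Finset.range n, c ^ (i / N) := by
        refine Finset.sum_le_sum fun i _ => ?_
        calc (walkQ G B ^ i) x y
            ≤ qrs G B i x := by
              rw [qrs]
              exact Finset.single_le_sum
                (fun v _ => walkQ_pow_nonneg i x v) (Finset.mem_univ y)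
          _ ≤ t i := ht_ub i x
          _ ≤ c ^ (i / N) := hbound i
    _ ≤ ∑ i ∈ Finset.range (N * n), c ^ (i / N) := by
        refine Finset.sum_le_sum_of_subset_of_nonneg ?_
          (fun i _ _ => pow_nonneg hc0 _)
        exact Finset.range_subset_range.2 (Nat.le_mul_of_pos_left n hNpos)
    _ = ∑ k ∈ Finset.range n, (N : ℝ) * c ^ k := hpows n
    _ = (N : ℝ) * ∑ k ∈ Finset.range n, c ^ k := by rw [Finset.mul_sum]
    _ ≤ (N : ℝ) * (1 - c)⁻¹ := by
        exact mul_le_mul_of_nonneg_left (hgeom n) (by positivity)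

theorem grFn_nonneg (x y : V) : 0 ≤ grFn G B x y :=
  div_nonneg (tsum_nonneg fun n => walkQ_pow_nonneg n x y) (Nat.cast_nonneg _)

theorem greenFn_off {x y : V} (hx : x ∈ B) (hy : y ∉ B) : GreenFn G B x y = 0 := by
  rw [GreenFn]
  convert tsum_zero with n
  cases n with
  | zero =>
    rw [pow_zero, Matrix.one_apply_ne]
    intro h
    exact hy (h ▸ hx)
  | succ n =>
    rw [pow_succ, Matrix.mul_apply]
    refine Finset.sum_eq_zero fun v _ => ?_
    have : walkQ G B v y = 0 := by
      rw [walkQ, Matrix.of_apply, if_neg (fun h => hy h.2)]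
    rw [this, mul_zero]

theorem grFn_off {x y : V} (hx : x ∈ B) (hy : y ∉ B) : grFn G B x y = 0 := by
  rw [grFn, greenFn_off hx hy, zero_div]

theorem grFn_harmonic (hdeg : ∀ v, 0 < G.degree v) (hG : G.Preconnected)
    (hB : B ≠ Set.univ) {x y : V} (hx : x ∈ B) (hy : y ∈ B) :
    (G.degree y : ℝ) * grFn G B x y
      = (if y = x then 1 else 0) + ∑ v ∈ G.neighborFinset y, grFn G B x v := by
  have hdy : ((G.degree y : ℝ)) ≠ 0 := by
    have := hdeg y
    positivity
  have key : GreenFn G B x y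
      = (if x = y then 1 else 0) + ∑ v, GreenFn G B x v * walkQ G B v y := by
    rw [GreenFn, Summable.tsum_eq_zero_add (green_summable hdeg hG hB x y)]
    have h0 : (walkQ G B ^ 0) x y = (if x = y then (1:ℝ) else 0) := by
      rw [pow_zero, Matrix.one_apply]
    have h2 : ∑' n : ℕ, (walkQ G B ^ (n + 1)) x y
        = ∑ v, GreenFn G B x v * walkQ G B v y := by
      have hexp : ∀ n : ℕ, (walkQ G B ^ (n + 1)) x y
          = ∑ v, (walkQ G B ^ n) x v * walkQ G B v y := by
        intro n
        rw [pow_succ, Matrix.mul_apply]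
      simp_rw [hexp]
      rw [Summable.tsum_finsetSum (fun v _ => (green_summable hdeg hG hB x v).mul_right _)]
      exact Finset.sum_congr rfl fun v _ => tsum_mul_right
    rw [h0, h2]
  have step2 : ∑ v, GreenFn G B x v * walkQ G B v y
      = ∑ v ∈ G.neighborFinset y, grFn G B x v := by
    have h1 : ∀ v, GreenFn G B x v * walkQ G B v y
        = if G.Adj y v then grFn G B x v else 0 := by
      intro v
      by_cases hvB : v ∈ B
      · by_cases hadj : G.Adj v y
        · rw [walkQ, Matrix.of_apply, if_pos ⟨hvB, hy⟩, walkP, Matrix.of_apply,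
            if_pos hadj, if_pos (G.adj_symm hadj), mul_one_div]
          rfl
        · rw [walkQ, Matrix.of_apply, if_pos ⟨hvB, hy⟩, walkP, Matrix.of_apply,
            if_neg hadj, if_neg (fun h => hadj (G.adj_symm h)), mul_zero]
      · rw [walkQ, Matrix.of_apply, if_neg (fun h => hvB h.1), mul_zero]
        split
        · rw [grFn, greenFn_off hx hvB, zero_div]
        · rfl
    simp_rw [h1]
    rw [SimpleGraph.neighborFinset_eq_filter, Finset.sum_filter]
  rw [grFn, mul_div_cancel₀ _ hdy, key, step2]
  congr 1
  by_cases h : x = y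
  · rw [if_pos h, if_pos h.symm]
  · rw [if_neg h, if_neg (fun hh => h hh.symm)]

end Green


section Main

variable [Fintype V] [DecidableEq V] {G : SimpleGraph V} [DecidableRel G.Adj]

lemma walk_cross {A : Set V} :
    ∀ {u z : V} (p : G.Walk u z), u ∈ A → z ∉ A →
      ∃ y t, y ∈ A ∧ t ∉ A ∧ G.Adj y t := by
  intro u z p
  induction p with
  | nil => intro hu hz; exact absurd hu hz
  | @cons u w z h q ih =>
    intro hu hz
    by_cases hw : w ∈ A
    · exact ih hw hz
    · exact ⟨u, w, hu, hw, h⟩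

theorem stmt0' (hG : G.Connected) (hV : 2 ≤ Fintype.card V)
    (A B : Set V) (hAB : A ⊆ B) (hB : B ≠ Set.univ) (hA : A.Nonempty)
    (x : V) (hx : x ∈ A) :
    let gr : V → ℝ := fun y => grFn G B x y
    let bdry : Set V := {y | y ∈ A ∧ ∃ z, z ∉ A ∧ G.Adj y z}
    let a : ℝ := sInf (gr '' bdry)
    let b : ℝ := sSup (gr '' bdry)
    let δ : ℝ := sSup (insert 0 {d : ℝ | ∃ u v, u ∈ B ∧ v ∈ B ∧ G.Adj u v ∧ d = |gr u - gr v|})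
    a ^ 2 / (a + δ) ≤ effRes G A (Set.univ \ B) ∧ effRes G A (Set.univ \ B) ≤ b + δ := by
  intro gr bdry a b δ
  classical
  have hdeg : ∀ v, 0 < G.degree v := degree_pos_of_connected hG hV
  have hxB : x ∈ B := hAB hx
  have hg0 : ∀ y, 0 ≤ gr y := fun y => grFn_nonneg x y
  have hgB : ∀ y, y ∉ B → gr y = 0 := fun y hy => grFn_off hxB hy
  have hgh : ∀ y ∈ B, (G.degree y : ℝ) * gr y
      = (if y = x then 1 else 0) + ∑ v ∈ G.neighborFinset y, gr v :=
    fun y hy => grFn_harmonic hdeg hG.preconnected hB hxB hy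
  -- the boundary is nonempty
  have hAne : A ≠ Set.univ := by
    intro h
    apply hB
    apply Set.eq_univ_of_univ_subset
    rw [← h]
    exact hAB
  have hbdry_ne : bdry.Nonempty := by
    obtain ⟨z, hz⟩ := Set.ne_univ_iff_exists_notMem A |>.1 hAne
    obtain ⟨a₀, ha₀⟩ := hA
    obtain ⟨p⟩ := hG.preconnected a₀ z
    obtain ⟨y, t, hyA, htA, hadj⟩ := walk_cross p ha₀ hz
    exact ⟨y, hyA, t, htA, hadj⟩
  have himgfin : (gr '' bdry).Finite := (Set.toFinite bdry).image gr
  have himgne : (gr '' bdry).Nonempty := hbdry_ne.image _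
  have hab : a ≤ b := csInf_le_csSup himgne himgfin.bddBelow himgfin.bddAbove
  have ha0 : 0 ≤ a := le_csInf himgne (by rintro _ ⟨y, hy, rfl⟩; exact hg0 y)
  have hble : ∀ y ∈ bdry, gr y ≤ b := fun y hy => le_csSup himgfin.bddAbove ⟨y, hy, rfl⟩
  have hage : ∀ y ∈ bdry, a ≤ gr y := fun y hy => csInf_le himgfin.bddBelow ⟨y, hy, rfl⟩
  have hDfin : (insert (0:ℝ)
      {d : ℝ | ∃ u v, u ∈ B ∧ v ∈ B ∧ G.Adj u v ∧ d = |gr u - gr v|}).Finite := by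
    refine Set.Finite.insert 0 ?_
    refine Set.Finite.subset (Set.finite_univ.image
      (fun p : V × V => |gr p.1 - gr p.2|)) ?_
    rintro d ⟨u, v, _, _, _, rfl⟩
    exact ⟨(u, v), trivial, rfl⟩
  have hδ0 : 0 ≤ δ := le_csSup hDfin.bddAbove (Set.mem_insert 0 _)
  have hδedge : ∀ u v, u ∈ B → v ∈ B → G.Adj u v → |gr u - gr v| ≤ δ :=
    fun u v hu hv hadj =>
      le_csSup hDfin.bddAbove (Set.mem_insert_of_mem _ ⟨u, v, hu, hv, hadj, rfl⟩)
  have hAf_sub : ∀ y ∈ A.toFinset, y ∈ B := fun y hy => hAB (Set.mem_toFinset.1 hy)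
  have hxAf : x ∈ A.toFinset := Set.mem_toFinset.2 hx
  -- b is positive
  have hfluxA : ∑ y ∈ A.toFinset, lap G gr y = 1 := flux_one hgh A.toFinset hAf_sub hxAf
  have hbpos : 0 < b := by
    by_contra hcon
    push_neg at hcon
    rw [sum_lap_boundary] at hfluxA
    have hle0 : ∑ y ∈ A.toFinset, ∑ v ∈ (G.neighborFinset y).filter
        (fun v => v ∉ A.toFinset), (gr y - gr v) ≤ 0 := by
      refine Finset.sum_nonpos fun y hy => Finset.sum_nonpos fun v hv => ?_
      rcases Finset.mem_filter.1 hv with ⟨hvn, hvA⟩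
      have hybd : y ∈ bdry :=
        ⟨Set.mem_toFinset.1 hy, v, fun hh => hvA (Set.mem_toFinset.2 hh),
          (SimpleGraph.mem_neighborFinset _ _ _).1 hvn⟩
      have h1 := hble y hybd
      have h2 := hg0 v
      linarith
    linarith
  have hcpos : 0 < b + δ := by linarith
  -- the admissible set is nonempty
  set S : Set ℝ := {E : ℝ | ∃ f : V → ℝ, (∀ w ∈ A, f w = 1) ∧
    (∀ z ∈ Set.univ \ B, f z = 0) ∧ E = dirEnergy G f} with hS
  have hSne : S.Nonempty := by
    refine ⟨dirEnergy G (fun y => if y ∈ A then 1 else 0),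
      fun y => if y ∈ A then 1 else 0, ?_, ?_, rfl⟩
    · intro w hw; simp [hw]
    · intro z hz
      have hzA : z ∉ A := fun hh => hz.2 (hAB hh)
      simp [hzA]
  have hSbdd : BddBelow S := by
    refine ⟨0, ?_⟩
    rintro E ⟨f, -, -, rfl⟩
    exact dirEnergy_nonneg f
  -- every admissible function has energy at least 1/(b+δ)
  have hEf : ∀ f : V → ℝ, (∀ w ∈ A, f w = 1) → (∀ z ∈ Set.univ \ B, f z = 0) →
      1 / (b + δ) ≤ dirEnergy G f := by
    intro f hf1 hf0
    set f' := fun y => max 0 (min 1 (f y)) with hf'def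
    have hf'1 : ∀ w ∈ A, f' w = 1 := by
      intro w hw
      simp [hf'def, hf1 w hw]
    have hf'0 : ∀ z, z ∉ B → f' z = 0 := by
      intro z hz
      simp [hf'def, hf0 z ⟨trivial, hz⟩]
    have hf'nn : ∀ y, 0 ≤ f' y := fun y => le_max_left 0 _
    have hEle : dirEnergy G f' ≤ dirEnergy G f := by
      rw [dirEnergy, dirEnergy]
      refine Finset.sum_le_sum fun e _ => ?_
      induction e with
      | _ u v =>
        rw [Sym2.lift_mk, Sym2.lift_mk]
        have lip : |f' u - f' v| ≤ |f u - f v| := by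
          have h1 : |f' u - f' v| ≤ |min 1 (f u) - min 1 (f v)| := by
            rw [hf'def]
            simp only
            rw [max_comm 0 (min 1 (f u)), max_comm 0 (min 1 (f v))]
            exact abs_max_sub_max_le_abs _ _ _
          have h2 : |min 1 (f u) - min 1 (f v)| ≤ |f u - f v| := by
            refine (abs_min_sub_min_le_max 1 (f u) 1 (f v)).trans ?_
            simp
          linarith
        calc (f' u - f' v) ^ 2 = |f' u - f' v| ^ 2 := (sq_abs _).symm
          _ ≤ |f u - f v| ^ 2 := by
              exact pow_le_pow_left₀ (abs_nonneg _) lip 2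
          _ = (f u - f v) ^ 2 := sq_abs _
    set w := fun y => min (gr y) (b + δ) with hwdef
    have hEw : dirEnergy G w ≤ b + δ := energy_min_le hg0 hgB hgh hxB hcpos.le
    have hEwnn : 0 ≤ dirEnergy G w := dirEnergy_nonneg w
    have hwlap : ∀ y ∈ B, 0 ≤ lap G w y := lap_min_nonneg hg0 hgh hcpos.le
    have hT : (1:ℝ) ≤ ∑ y, f' y * lap G w y := by
      have h1 : ∑ y, f' y * lap G w y = ∑ y ∈ B.toFinset, f' y * lap G w y := by
        refine (Finset.sum_subset (Finset.subset_univ _) ?_).symm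
        intro y _ hy
        rw [hf'0 y (by simpa [Set.mem_toFinset] using hy), zero_mul]
      have h2 : ∑ y ∈ A.toFinset, f' y * lap G w y
          ≤ ∑ y ∈ B.toFinset, f' y * lap G w y := by
        refine Finset.sum_le_sum_of_subset_of_nonneg ?_ ?_
        · intro y hy
          exact Set.mem_toFinset.2 (hAB (Set.mem_toFinset.1 hy))
        · intro y hy _
          exact mul_nonneg (hf'nn y) (hwlap y (Set.mem_toFinset.1 hy))
      have h3 : ∑ y ∈ A.toFinset, f' y * lap G w y = ∑ y ∈ A.toFinset, lap G w y := by
        refine Finset.sum_congr rfl fun y hy => ?_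
        rw [hf'1 y (Set.mem_toFinset.1 hy), one_mul]
      have h4 : ∑ y ∈ A.toFinset, lap G w y = ∑ y ∈ A.toFinset, lap G gr y := by
        rw [sum_lap_boundary, sum_lap_boundary]
        refine Finset.sum_congr rfl fun y hy => Finset.sum_congr rfl fun v hv => ?_
        rcases Finset.mem_filter.1 hv with ⟨hvn, hvA⟩
        have hadj : G.Adj y v := (SimpleGraph.mem_neighborFinset _ _ _).1 hvn
        have hyA : y ∈ A := Set.mem_toFinset.1 hy
        have hybd : y ∈ bdry := ⟨hyA, v, fun hh => hvA (Set.mem_toFinset.2 hh), hadj⟩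
        have hwy : w y = gr y := min_eq_left (by
          have := hble y hybd
          linarith)
        have hwv : w v = gr v := by
          by_cases hvB : v ∈ B
          · refine min_eq_left ?_
            have habs := hδedge y v (hAB hyA) hvB hadj
            have h5 : gr v - gr y ≤ |gr y - gr v| := by
              rw [abs_sub_comm]
              exact le_abs_self _
            have := hble y hybd
            linarith
          · show min (gr v) (b + δ) = gr v
            rw [hgB v hvB]
            exact min_eq_left hcpos.le
        rw [hwy, hwv]
      calc (1:ℝ) = ∑ y ∈ A.toFinset, lap G gr y := hfluxA.symm
        _ = ∑ y ∈ A.toFinset, lap G w y := h4.symm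
        _ = ∑ y ∈ A.toFinset, f' y * lap G w y := h3.symm
        _ ≤ ∑ y ∈ B.toFinset, f' y * lap G w y := h2
        _ = ∑ y, f' y * lap G w y := h1.symm
    -- Cauchy-Schwarz
    have hpair := pair_energy (G := G) w f'
    have hCS : (1:ℝ) ≤ dirEnergy G f' * dirEnergy G w := by
      set p := fun e => Sym2.lift
        ⟨fun u v => |w u - w v|, fun u v => abs_sub_comm (w u) (w v)⟩ e with hp
      set q := fun e => Sym2.lift
        ⟨fun u v => |f' u - f' v|, fun u v => abs_sub_comm (f' u) (f' v)⟩ e with hq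
      have hTle : (1:ℝ) ≤ ∑ e ∈ G.edgeFinset, p e * q e := by
        refine le_trans (hT.trans_eq hpair.symm) (Finset.sum_le_sum fun e _ => ?_)
        induction e with
        | _ u v =>
          show (w u - w v) * (f' u - f' v) ≤ |w u - w v| * |f' u - f' v|
          calc (w u - w v) * (f' u - f' v) ≤ |(w u - w v) * (f' u - f' v)| :=
                le_abs_self _
            _ = |w u - w v| * |f' u - f' v| := abs_mul _ _
      have hcs2 := Finset.sum_mul_sq_le_sq_mul_sq G.edgeFinset p q
      have hp2 : ∑ e ∈ G.edgeFinset, p e ^ 2 = dirEnergy G w := by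
        rw [dirEnergy]
        refine Finset.sum_congr rfl fun e _ => ?_
        induction e with
        | _ u v =>
          show |w u - w v| ^ 2 = (w u - w v) ^ 2
          exact sq_abs _
      have hq2 : ∑ e ∈ G.edgeFinset, q e ^ 2 = dirEnergy G f' := by
        rw [dirEnergy]
        refine Finset.sum_congr rfl fun e _ => ?_
        induction e with
        | _ u v =>
          show |f' u - f' v| ^ 2 = (f' u - f' v) ^ 2
          exact sq_abs _
      have h6 : (1:ℝ) ≤ (∑ e ∈ G.edgeFinset, p e * q e) ^ 2 := by nlinarith
      rw [hp2, hq2] at hcs2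
      nlinarith
    have hEf'nn : 0 ≤ dirEnergy G f' := dirEnergy_nonneg f'
    have h7 : (1:ℝ) ≤ dirEnergy G f' * (b + δ) := by nlinarith
    have h8 : 1 / (b + δ) ≤ dirEnergy G f' := by
      rw [div_le_iff₀ hcpos]
      linarith
    linarith
  have hSinf : 1 / (b + δ) ≤ sInf S := by
    refine le_csInf hSne ?_
    rintro E ⟨f, h1, h0, rfl⟩
    exact hEf f h1 h0
  have heff : effRes G A (Set.univ \ B) = (sInf S)⁻¹ := rfl
  have hSinfpos : 0 < sInf S := lt_of_lt_of_le (by positivity) hSinf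
  constructor
  · -- lower bound
    by_cases hA0 : a = 0
    · rw [hA0]
      have h1 : (0:ℝ) ^ 2 / (0 + δ) = 0 := by
        rw [zero_pow (by norm_num), zero_div]
      rw [h1, heff]
      positivity
    · have hapos : 0 < a := lt_of_le_of_ne ha0 (Ne.symm hA0)
      have hgeA : ∀ y ∈ A, a ≤ gr y := by
        intro y hy
        obtain ⟨z, hzbd, hzle⟩ := min_principle hG hgh hAB hB hx y hy
        exact le_trans (hage z hzbd) hzle
      set f₀ := fun y => min (gr y) a / a with hf₀
      have hmem : dirEnergy G f₀ ∈ S := by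
        refine ⟨f₀, ?_, ?_, rfl⟩
        · intro y hy
          rw [hf₀]
          simp only
          rw [min_eq_right (hgeA y hy), div_self hapos.ne']
        · intro z hz
          rw [hf₀]
          simp only
          rw [hgB z hz.2, min_eq_left ha0, zero_div]
      have hE₀ : dirEnergy G f₀ ≤ 1 / a := by
        have hsc : dirEnergy G f₀ = dirEnergy G (fun y => min (gr y) a) / a ^ 2 := by
          rw [dirEnergy, dirEnergy, Finset.sum_div]
          refine Finset.sum_congr rfl fun e _ => ?_
          induction e with
          | _ u v =>
            rw [Sym2.lift_mk, Sym2.lift_mk, hf₀]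
            simp only
            rw [div_sub_div_same, div_pow]
        rw [hsc]
        have hEm := energy_min_le hg0 hgB hgh hxB ha0
        have h9 : dirEnergy G (fun y => min (gr y) a) / a ^ 2 ≤ a / a ^ 2 :=
          (div_le_div_iff_of_pos_right (by positivity : (0:ℝ) < a ^ 2)).2 hEm
        have h10 : a / a ^ 2 = 1 / a := by
          rw [sq, ← div_div, div_self hapos.ne']
        linarith
      have hsinf_le : sInf S ≤ 1 / a := (csInf_le hSbdd hmem).trans hE₀
      rw [heff]
      have h11 : (1 / a)⁻¹ ≤ (sInf S)⁻¹ := inv_anti₀ hSinfpos hsinf_le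
      rw [one_div, inv_inv] at h11
      have h12 : a ^ 2 / (a + δ) ≤ a := by
        rw [div_le_iff₀ (by linarith : (0:ℝ) < a + δ)]
        nlinarith
      linarith
  · -- upper bound
    rw [heff]
    calc (sInf S)⁻¹ ≤ (1 / (b + δ))⁻¹ := inv_anti₀ (by positivity) hSinf
      _ = b + δ := by rw [one_div, inv_inv]

end Main


theorem stmt0 [Fintype V] [DecidableEq V] (G : SimpleGraph V) [DecidableRel G.Adj]
    (hG : G.Connected) (hV : 2 ≤ Fintype.card V)
    (A B : Set V) (hAB : A ⊆ B) (hB : B ≠ Set.univ) (hA : A.Nonempty)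
    (x : V) (hx : x ∈ A) :
    let gr : V → ℝ := fun y => grFn G B x y
    let bdry : Set V := {y | y ∈ A ∧ ∃ z, z ∉ A ∧ G.Adj y z}
    let a : ℝ := sInf (gr '' bdry)
    let b : ℝ := sSup (gr '' bdry)
    let δ : ℝ := sSup (insert 0 {d : ℝ | ∃ u v, u ∈ B ∧ v ∈ B ∧ G.Adj u v ∧ d = |gr u - gr v|})
    a ^ 2 / (a + δ) ≤ effRes G A (Set.univ \ B) ∧ effRes G A (Set.univ \ B) ≤ b + δ :=
  stmt0' hG hV A B hAB hB hA x hx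
end
end

section
/- Let A ⊆ V(G) be a set such that the simple random walk started from every vertex of G almost surely hits A in finite time. Then for all x, y ∈ V(G)∖A there exists a coupling of X^x and X^y (a single probability space carrying two processes with the respective laws of X^x and X^y) such that, almost surely, ℙ[X^x_{τ^x} = X^y_{τ^y} | 𝒢] ≥ p, where 𝒢 is the σ-algebra generated by the stopped path (X^y_{n ∧ τ^y})_{n ≥ 0} and p := ℙ[X^x disconnects y from A before time τ^x] is the (deterministic) unconditioned probability of the disconnection event. -/
open MeasureTheory
open scoped Classical ENNReal

noncomputable section

/-- One-step transition probability of the simple random walk on `G`, valued in `[0,∞]`. -/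
def srwP {V : Type*} (G : SimpleGraph V) (u v : V) : ℝ≥0∞ :=
  if G.Adj u v then ((G.neighborSet u).ncard : ℝ≥0∞)⁻¹ else 0

/-- `ν` is the law on path space `ℕ → V` of the simple random walk on `G` started at `z`,
characterized by its cylinder probabilities. -/
def IsSRWLaw {V : Type*} [MeasurableSpace V] (G : SimpleGraph V) (z : V)
    (ν : Measure (ℕ → V)) : Prop :=
  IsProbabilityMeasure ν ∧
    ∀ (n : ℕ) (v : ℕ → V),
      ν {ω | ∀ i ≤ n, ω i = v i} =
        (if v 0 = z then 1 else 0) * ∏ i ∈ Finset.range n, srwP G (v i) (v (i + 1))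

/-- First hitting time of `A` by a path (junk value `0` if `A` is never hit). -/
def hitT {V : Type*} (A : Set V) (ω : ℕ → V) : ℕ := sInf {n | ω n ∈ A}

/-- A path `ω` disconnects `y` from `A` before its hitting time of `A`: every finite path
in `G` from `y` to a vertex of `A` passes through `{ω 0, …, ω (hitT A ω)}`. -/
def Disconnects {V : Type*} (G : SimpleGraph V) (A : Set V) (y : V) (ω : ℕ → V) : Prop :=
  ∀ a ∈ A, ∀ w : G.Walk y a, ∃ v ∈ w.support, ∃ n ≤ hitT A ω, ω n = v

/-- The property required of the coupling `(Xx, Xy)` on `(Ω, μ)`: the two coordinates have the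
laws `νx` and `νy` of the two walks, and almost surely the conditional probability, given the
σ-algebra generated by the stopped path of `Xy`, that the two walks first hit `A` at the same
point is at least the probability that the walk from `x` disconnects `y` from `A`. -/
def GoodCoupling {V : Type*} [MeasurableSpace V] (G : SimpleGraph V) (A : Set V) (y : V)
    (νx νy : Measure (ℕ → V)) {Ω : Type} [MeasurableSpace Ω] (μ : Measure Ω)
    (Xx Xy : ℕ → Ω → V) : Prop :=
  IsProbabilityMeasure μ ∧ (∀ n : ℕ, Measurable (Xx n)) ∧ (∀ n : ℕ, Measurable (Xy n)) ∧
  μ.map (fun ω n => Xx n ω) = νx ∧ μ.map (fun ω n => Xy n ω) = νy ∧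
  (∀ᵐ ω ∂μ,
    (νx {w | Disconnects G A y w}).toReal ≤
      (μ[Set.indicator
            {ω' | Xx (hitT A fun n => Xx n ω') ω' = Xy (hitT A fun n => Xy n ω') ω'}
            (fun _ => (1 : ℝ)) |
          MeasurableSpace.comap
            (fun ω' => fun n => Xy (min n (hitT A fun k => Xy k ω')) ω')
            inferInstance]) ω)


section PartA

set_option linter.unusedSectionVars false

variable {V : Type*} [Countable V] [MeasurableSpace V] [MeasurableSingletonClass V]

namespace SRW

lemma measV (s : Set V) : MeasurableSet s := s.to_countable.measurableSet

lemma measurable_fromV {β : Type*} [MeasurableSpace β] (f : V → β) : Measurable f :=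
  Measurable.of_discrete

lemma hitT_eq_iff (A : Set V) (ω : ℕ → V) (n : ℕ) :
    hitT A ω = n ↔ (ω n ∈ A ∧ ∀ m < n, ω m ∉ A) ∨ (n = 0 ∧ ∀ m, ω m ∉ A) := by
  constructor
  · intro h
    by_cases hne : ∃ k, ω k ∈ A
    · left
      have hmem : hitT A ω ∈ {k | ω k ∈ A} := Nat.sInf_mem hne
      constructor
      · rwa [← h]
      · intro m hm hmA
        have hle : hitT A ω ≤ m := Nat.sInf_le (show m ∈ {k | ω k ∈ A} from hmA)
        omega
    · right
      push_neg at hne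
      refine ⟨?_, hne⟩
      have : {k | ω k ∈ A} = (∅ : Set ℕ) := by
        ext k; simp [hne k]
      rw [← h]
      simp [hitT, this]
  · rintro (⟨h1, h2⟩ | ⟨h1, h2⟩)
    · refine le_antisymm (Nat.sInf_le (show n ∈ {k | ω k ∈ A} from h1)) ?_
      by_contra hlt
      push_neg at hlt
      have hmem : hitT A ω ∈ {k | ω k ∈ A} := Nat.sInf_mem ⟨n, h1⟩
      exact h2 _ hlt hmem
    · have : {k | ω k ∈ A} = (∅ : Set ℕ) := by
        ext k; simp [h2 k]
      simp [hitT, this, h1]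

lemma hitT_mem {A : Set V} {ω : ℕ → V} (h : ∃ k, ω k ∈ A) : ω (hitT A ω) ∈ A :=
  Nat.sInf_mem h

lemma hitT_le {A : Set V} {ω : ℕ → V} {k : ℕ} (h : ω k ∈ A) : hitT A ω ≤ k :=
  Nat.sInf_le h

lemma not_mem_of_lt_hitT {A : Set V} {ω : ℕ → V} {k : ℕ} (h : k < hitT A ω) : ω k ∉ A := by
  intro hk
  have hle : hitT A ω ≤ k := Nat.sInf_le (show k ∈ {n | ω n ∈ A} from hk)
  omega

lemma measurable_hitT (A : Set V) : Measurable (hitT A) := by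
  apply measurable_to_countable'
  intro n
  have : hitT A ⁻¹' {n} =
      (((fun ω : ℕ → V => ω n) ⁻¹' A) ∩ ⋂ (m : ℕ) (_ : m < n), (fun ω : ℕ → V => ω m) ⁻¹' Aᶜ) ∪
      ({ω : ℕ → V | n = 0} ∩ ⋂ (m : ℕ), (fun ω : ℕ → V => ω m) ⁻¹' Aᶜ) := by
    ext ω
    simp only [Set.mem_preimage, Set.mem_singleton_iff, hitT_eq_iff A ω n, Set.mem_union,
      Set.mem_inter_iff, Set.mem_iInter, Set.mem_compl_iff, Set.mem_setOf_eq]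
  rw [this]
  exact (((measurable_pi_apply n) (measV A)).inter
      (MeasurableSet.iInter fun m => MeasurableSet.iInter fun _ =>
        (measurable_pi_apply m) (measV Aᶜ))).union
    ((MeasurableSet.const _).inter
      (MeasurableSet.iInter fun m => (measurable_pi_apply m) (measV Aᶜ)))

lemma measurable_evalT {T : (ℕ → V) → ℕ} (hT : Measurable T) :
    Measurable fun ω : ℕ → V => ω (T ω) := by
  apply measurable_to_countable'
  intro v
  have : (fun ω : ℕ → V => ω (T ω)) ⁻¹' {v} =
      ⋃ n, T ⁻¹' {n} ∩ (fun ω : ℕ → V => ω n) ⁻¹' {v} := by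
    ext ω
    simp only [Set.mem_preimage, Set.mem_singleton_iff, Set.mem_iUnion, Set.mem_inter_iff]
    constructor
    · intro h; exact ⟨T ω, rfl, h⟩
    · rintro ⟨n, rfl, h⟩; exact h
  rw [this]
  exact MeasurableSet.iUnion fun n =>
    (hT (measurableSet_singleton n)).inter ((measurable_pi_apply n) (measV _))

lemma measurable_hit (A : Set V) : Measurable fun ω : ℕ → V => ω (hitT A ω) :=
  measurable_evalT (measurable_hitT A)

lemma measurable_stopped (A : Set V) :
    Measurable fun ω : ℕ → V => (fun n => ω (min n (hitT A ω))) := by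
  apply measurable_pi_lambda
  intro n
  exact measurable_evalT (Measurable.of_discrete.comp (measurable_hitT A))

/-- The hitting point of the stopped path is the hitting point of the path. -/
lemma hit_stopped (A : Set V) (ω : ℕ → V) :
    (fun n => ω (min n (hitT A ω))) (hitT A (fun n => ω (min n (hitT A ω)))) =
      ω (hitT A ω) := by
  by_cases h : ∃ k, ω k ∈ A
  · have hτ : hitT A (fun n => ω (min n (hitT A ω))) = hitT A ω := by
      rw [hitT_eq_iff]
      left
      constructor
      · simpa using hitT_mem h
      · intro m hm
        simp only [min_eq_left (le_of_lt hm)]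
        exact not_mem_of_lt_hitT hm
    rw [hτ]
    simp
  · have hτA : hitT A ω = 0 := by
      rw [hitT_eq_iff]
      right
      push_neg at h
      exact ⟨rfl, h⟩
    have h0 : ω 0 ∉ A := by
      intro h0
      exact absurd ⟨0, h0⟩ h
    have : hitT A (fun n => ω (min n (hitT A ω))) = 0 := by
      rw [hitT_eq_iff]
      right
      refine ⟨rfl, fun m => ?_⟩
      simp [hτA, h0]
    rw [this, hτA]
    simp

lemma hit_stopped' (A : Set V) (ω : ℕ → V) :
    ω (min (hitT A (fun n => ω (min n (hitT A ω)))) (hitT A ω)) = ω (hitT A ω) :=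
  hit_stopped A ω

/-! ### Cylinder sets -/

def Cyl (n : ℕ) (v : ℕ → V) : Set (ℕ → V) := {ω | ∀ i ≤ n, ω i = v i}

def CylSets (V : Type*) : Set (Set (ℕ → V)) := {s | ∃ n v, s = Cyl n v}

lemma measurableSet_cyl (n : ℕ) (v : ℕ → V) : MeasurableSet (Cyl n v) := by
  have : Cyl n v = ⋂ (i : ℕ) (_ : i ≤ n), (fun ω : ℕ → V => ω i) ⁻¹' {v i} := by
    ext ω; simp [Cyl]
  rw [this]
  exact MeasurableSet.iInter fun i => MeasurableSet.iInter fun _ =>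
    (measurable_pi_apply i) (measV _)

lemma isPiSystem_cylSets : IsPiSystem (CylSets V) := by
  rintro s ⟨n, v, rfl⟩ t ⟨m, w, rfl⟩ hne
  obtain ⟨ω₀, hω₀v, hω₀w⟩ := hne
  rcases le_total n m with h | h
  · refine ⟨m, w, ?_⟩
    apply Set.Subset.antisymm (Set.inter_subset_right)
    intro ω hω
    refine ⟨fun i hi => ?_, hω⟩
    rw [hω i (le_trans hi h), ← hω₀w i (le_trans hi h), hω₀v i hi]
  · refine ⟨n, v, ?_⟩
    apply Set.Subset.antisymm (Set.inter_subset_left)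
    intro ω hω
    refine ⟨hω, fun i hi => ?_⟩
    rw [hω i (le_trans hi h), ← hω₀v i (le_trans hi h), hω₀w i hi]

/-- A finite-dimensional description suffices: the coordinate preimage of a point is a countable
union of cylinders. -/
lemma eval_preimage_singleton (i : ℕ) (v : V) :
    (fun ω : ℕ → V => ω i) ⁻¹' {v} =
      ⋃ (f : Fin (i+1) → V) (_ : f ⟨i, Nat.lt_succ_self i⟩ = v),
        Cyl i (fun j => if h : j < i + 1 then f ⟨j, h⟩ else v) := by
  ext ω
  simp only [Set.mem_preimage, Set.mem_singleton_iff, Set.mem_iUnion, Cyl, Set.mem_setOf_eq]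
  constructor
  · intro h
    refine ⟨fun j => ω j, h, fun k hk => ?_⟩
    rw [dif_pos (Nat.lt_succ_of_le hk)]
  · rintro ⟨f, hf, hC⟩
    have := hC i le_rfl
    rw [dif_pos (Nat.lt_succ_self i)] at this
    rw [this, hf]

lemma generateFrom_cylSets :
    (MeasurableSpace.pi : MeasurableSpace (ℕ → V)) = .generateFrom (CylSets V) := by
  apply le_antisymm
  · rw [MeasurableSpace.pi]
    apply iSup_le
    intro i
    rw [MeasurableSpace.le_def]
    intro s hs
    obtain ⟨t, ht, rfl⟩ := MeasurableSpace.measurableSet_comap.1 hs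
    have htu : (fun ω : ℕ → V => ω i) ⁻¹' t = ⋃ v ∈ t, (fun ω : ℕ → V => ω i) ⁻¹' {v} := by
      ext ω; simp
    rw [htu]
    refine MeasurableSet.biUnion t.to_countable fun v _ => ?_
    rw [eval_preimage_singleton]
    exact MeasurableSet.iUnion fun f => MeasurableSet.iUnion fun _ =>
      MeasurableSpace.measurableSet_generateFrom ⟨i, _, rfl⟩
  · apply MeasurableSpace.generateFrom_le
    rintro s ⟨n, v, rfl⟩
    exact measurableSet_cyl n v

end SRW

end PartA

section PartB

set_option linter.unusedSectionVars false
set_option maxHeartbeats 1000000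

namespace SRW

variable {V : Type*} [Countable V] [MeasurableSpace V] [MeasurableSingletonClass V]
variable {G : SimpleGraph V} {ν : V → Measure (ℕ → V)} {A : Set V}

/-- Prepending a vertex to a path. -/
def cons (z : V) (ω : ℕ → V) : ℕ → V := fun n => Nat.rec z (fun k _ => ω k) n

@[simp] lemma cons_zero (z : V) (ω : ℕ → V) : cons z ω 0 = z := rfl
@[simp] lemma cons_succ (z : V) (ω : ℕ → V) (n : ℕ) : cons z ω (n + 1) = ω n := rfl

lemma measurable_cons (z : V) : Measurable (cons (V := V) z) := by
  apply measurable_pi_lambda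
  intro n
  cases n with
  | zero => exact measurable_const
  | succ k => exact measurable_pi_apply k

lemma tsum_srwP {z : V} (hfin : (G.neighborSet z).Finite) (hne : (G.neighborSet z).Nonempty) :
    ∑' u, srwP G z u = 1 := by
  haveI := hfin.fintype
  have hcard : (G.neighborSet z).ncard ≠ 0 := by
    rw [Ne, Set.ncard_eq_zero hfin]
    exact hne.ne_empty
  rw [tsum_eq_sum (s := hfin.toFinset) (by
    intro u hu
    rw [srwP, if_neg]
    intro h
    exact hu (hfin.mem_toFinset.2 h))]
  have hconst : ∀ u ∈ hfin.toFinset, srwP G z u = ((G.neighborSet z).ncard : ℝ≥0∞)⁻¹ := by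
    intro u hu
    rw [srwP, if_pos (show G.Adj z u from hfin.mem_toFinset.1 hu)]
  rw [Finset.sum_congr rfl hconst, Finset.sum_const, nsmul_eq_mul]
  have hcards : (hfin.toFinset.card : ℝ≥0∞) = ((G.neighborSet z).ncard : ℝ≥0∞) := by
    norm_cast
    exact (Set.ncard_eq_toFinset_card _ hfin).symm
  rw [hcards]
  exact ENNReal.mul_inv_cancel (by exact_mod_cast hcard) (by simp)

lemma neighbor_nonempty (hG : G.Connected) [Nontrivial V] (z : V) :
    (G.neighborSet z).Nonempty := by
  obtain ⟨u, hu⟩ := exists_ne z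
  obtain ⟨w⟩ := hG.preconnected z u
  cases w with
  | nil => exact absurd rfl hu
  | cons h p => exact ⟨_, h⟩

/-- The one-step Markov property, as an identity of measures. -/
lemma markov (hν : ∀ z, IsSRWLaw G z (ν z)) (hlf : ∀ v, (G.neighborSet v).Finite)
    (hnb : ∀ v, (G.neighborSet v).Nonempty) (z : V) :
    ν z = (Measure.sum fun u => srwP G z u • ν u).map (cons z) := by
  haveI : ∀ u, IsProbabilityMeasure (ν u) := fun u => (hν u).1
  have hsum1 : ∑' u, srwP G z u = 1 := tsum_srwP (hlf z) (hnb z)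
  have hmap : ∀ s : Set (ℕ → V), MeasurableSet s →
      ((Measure.sum fun u => srwP G z u • ν u).map (cons z)) s
        = ∑' u, srwP G z u * ν u (cons z ⁻¹' s) := by
    intro s hs
    rw [Measure.map_apply (measurable_cons z) hs, Measure.sum_apply _ ((measurable_cons z) hs)]
    exact tsum_congr fun u => by rw [Measure.smul_apply, smul_eq_mul]
  have huniv : ((Measure.sum fun u => srwP G z u • ν u).map (cons z)) Set.univ = 1 := by
    rw [hmap _ MeasurableSet.univ]
    simp only [Set.preimage_univ, measure_univ, mul_one]
    exact hsum1
  refine MeasureTheory.ext_of_generate_finite (CylSets V) generateFrom_cylSets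
    isPiSystem_cylSets ?_ (by rw [huniv, measure_univ])
  rintro s ⟨n, v, rfl⟩
  rw [hmap _ (measurableSet_cyl n v)]
  by_cases h0 : v 0 = z
  · cases n with
    | zero =>
      have hpre : cons z ⁻¹' Cyl 0 v = Set.univ := by
        ext ω
        simp only [Set.mem_preimage, Cyl, Set.mem_setOf_eq, Set.mem_univ, iff_true]
        intro i hi
        interval_cases i
        exact h0.symm
      rw [hpre]
      have := (hν z).2 0 v
      rw [show ({ω : ℕ → V | ∀ i ≤ 0, ω i = v i}) = Cyl 0 v from rfl] at this
      rw [this, if_pos h0]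
      simp [hsum1]
    | succ m =>
      have hpre : cons z ⁻¹' Cyl (m+1) v = Cyl m (fun i => v (i+1)) := by
        ext ω
        simp only [Set.mem_preimage, Cyl, Set.mem_setOf_eq]
        constructor
        · intro h j hj
          exact h (j+1) (by omega)
        · intro h i hi
          cases i with
          | zero => exact h0.symm
          | succ j => exact h j (by omega)
      rw [hpre]
      have hterm : ∀ u, srwP G z u * ν u (Cyl m (fun i => v (i+1)))
          = srwP G z u * ((if v 1 = u then 1 else 0)
              * ∏ i ∈ Finset.range m, srwP G (v (i+1)) (v (i+2))) := by
        intro u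
        congr 1
        exact (hν u).2 m (fun i => v (i+1))
      rw [tsum_congr hterm]
      rw [tsum_eq_single (v 1) (by
        intro u hu
        rw [if_neg (Ne.symm hu)]
        simp)]
      rw [if_pos rfl, one_mul]
      have := (hν z).2 (m+1) v
      rw [show ({ω : ℕ → V | ∀ i ≤ m+1, ω i = v i}) = Cyl (m+1) v from rfl] at this
      rw [this, if_pos h0, one_mul, Finset.prod_range_succ']
      rw [h0, mul_comm]
  · have hpre : cons z ⁻¹' Cyl n v = ∅ := by
      ext ω
      simp only [Set.mem_preimage, Cyl, Set.mem_setOf_eq, Set.mem_empty_iff_false, iff_false]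
      intro h
      exact h0 (h 0 (Nat.zero_le n)).symm
    rw [hpre]
    have := (hν z).2 n v
    rw [show ({ω : ℕ → V | ∀ i ≤ n, ω i = v i}) = Cyl n v from rfl] at this
    rw [this, if_neg h0, zero_mul]
    simp

lemma lintegral_markov (hν : ∀ z, IsSRWLaw G z (ν z)) (hlf : ∀ v, (G.neighborSet v).Finite)
    (hnb : ∀ v, (G.neighborSet v).Nonempty) (z : V) {f : (ℕ → V) → ℝ≥0∞} (hf : Measurable f) :
    ∫⁻ ω, f ω ∂ν z = ∑' u, srwP G z u * ∫⁻ ω, f (cons z ω) ∂ν u := by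
  rw [markov hν hlf hnb z, lintegral_map hf (measurable_cons z), lintegral_sum_measure]
  exact tsum_congr fun u => lintegral_smul_measure _ _

lemma ae_start (hν : ∀ z, IsSRWLaw G z (ν z)) (z : V) : ∀ᵐ ω ∂ν z, ω 0 = z := by
  haveI := (hν z).1
  have hms : MeasurableSet {ω : ℕ → V | ω 0 = z} := by
    show MeasurableSet ((fun ω : ℕ → V => ω 0) ⁻¹' {z})
    exact (measurable_pi_apply 0) (measV ({z} : Set V))
  have h1 : ν z {ω : ℕ → V | ω 0 = z} = 1 := by
    have hset : {ω : ℕ → V | ω 0 = z} = {ω : ℕ → V | ∀ i ≤ 0, ω i = (fun _ => z) i} := by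
      ext ω
      constructor
      · intro h i hi; interval_cases i; exact h
      · intro h; exact h 0 le_rfl
    rw [hset, (hν z).2 0 (fun _ => z)]
    simp
  rw [ae_iff]
  exact (prob_compl_eq_zero_iff hms).2 h1

lemma ae_hits (hhit : ∀ z : V, (ν z) {ω | ∃ n : ℕ, ω n ∈ A} = 1)
    (hν : ∀ z, IsSRWLaw G z (ν z)) (z : V) : ∀ᵐ ω ∂ν z, ∃ n, ω n ∈ A := by
  haveI := (hν z).1
  have hms : MeasurableSet {ω : ℕ → V | ∃ n, ω n ∈ A} := by
    have : {ω : ℕ → V | ∃ n, ω n ∈ A} = ⋃ n, (fun ω : ℕ → V => ω n) ⁻¹' A := by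
      ext ω; simp
    rw [this]
    exact MeasurableSet.iUnion fun n => (measurable_pi_apply n) (measV A)
  rw [ae_iff]
  exact (prob_compl_eq_zero_iff hms).2 (hhit z)

lemma ae_adj (hν : ∀ z, IsSRWLaw G z (ν z)) (z : V) :
    ∀ᵐ ω ∂ν z, ∀ n, G.Adj (ω n) (ω (n + 1)) := by
  have key : ∀ (n : ℕ) (u w : V), ¬ G.Adj u w →
      ν z {ω : ℕ → V | ω n = u ∧ ω (n+1) = w} = 0 := by
    intro n u w hadj
    have hsub : {ω : ℕ → V | ω n = u ∧ ω (n+1) = w} ⊆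
        ⋃ (f : Fin (n+2) → V)
          (_ : f ⟨n, by omega⟩ = u ∧ f ⟨n+1, by omega⟩ = w),
          Cyl (n+1) (fun j => if h : j < n + 2 then f ⟨j, h⟩ else u) := by
      rintro ω ⟨h1, h2⟩
      refine Set.mem_iUnion.2 ⟨fun j => ω j, Set.mem_iUnion.2 ⟨⟨h1, h2⟩, ?_⟩⟩
      intro i hi
      show ω i = if h : i < n + 2 then (fun j : Fin (n + 2) => ω j) ⟨i, h⟩ else u
      rw [dif_pos (by omega)]
    refine measure_mono_null hsub (measure_iUnion_null fun f => measure_iUnion_null fun hf => ?_)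
    have := (hν z).2 (n+1) (fun j => if h : j < n + 2 then f ⟨j, h⟩ else u)
    rw [show ({ω : ℕ → V | ∀ i ≤ n+1, ω i
        = (fun j => if h : j < n + 2 then f ⟨j, h⟩ else u) i})
      = Cyl (n+1) (fun j => if h : j < n + 2 then f ⟨j, h⟩ else u) from rfl] at this
    rw [this]
    apply mul_eq_zero_of_right
    apply Finset.prod_eq_zero (Finset.self_mem_range_succ n)
    have e1 : (if h : n < n + 2 then f ⟨n, h⟩ else u) = u := by
      rw [dif_pos (by omega)]
      exact congrArg f (by ext; simp) |>.trans hf.1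
    have e2 : (if h : n + 1 < n + 2 then f ⟨n+1, h⟩ else u) = w := by
      rw [dif_pos (by omega)]
      exact congrArg f (by ext; simp) |>.trans hf.2
    rw [e1, e2, srwP, if_neg hadj]
  have hcompl : ν z {ω : ℕ → V | ¬ ∀ n, G.Adj (ω n) (ω (n+1))} = 0 := by
    have hsub : {ω : ℕ → V | ¬ ∀ n, G.Adj (ω n) (ω (n+1))} ⊆
        ⋃ (n : ℕ) (p : V × V) (_ : ¬ G.Adj p.1 p.2),
          {ω : ℕ → V | ω n = p.1 ∧ ω (n+1) = p.2} := by
      intro ω hω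
      push_neg at hω
      obtain ⟨n, hn⟩ := hω
      exact Set.mem_iUnion.2 ⟨n, Set.mem_iUnion.2 ⟨(ω n, ω (n+1)),
        Set.mem_iUnion.2 ⟨hn, ⟨rfl, rfl⟩⟩⟩⟩
    exact measure_mono_null hsub (measure_iUnion_null fun n => measure_iUnion_null fun p =>
      measure_iUnion_null fun hp => key n p.1 p.2 hp)
  rw [ae_iff]
  exact hcompl

lemma hitT_cons {B : Set V} {z : V} {ω : ℕ → V} (hz : z ∉ B) (hω : ∃ n, ω n ∈ B) :
    hitT B (cons z ω) = hitT B ω + 1 := by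
  rw [hitT_eq_iff]
  left
  constructor
  · show cons z ω (hitT B ω + 1) ∈ B
    rw [cons_succ]
    exact hitT_mem hω
  · intro m hm
    cases m with
    | zero => exact hz
    | succ k =>
      show ω k ∉ B
      exact not_mem_of_lt_hitT (by omega)

/-- Harmonic measure of `{H_A = b}` from `z`. -/
def hfun (ν : V → Measure (ℕ → V)) (A : Set V) (b : V) (z : V) : ℝ≥0∞ :=
  ν z {ω | ω (hitT A ω) = b}

lemma measurableSet_hitset (A : Set V) (b : V) :
    MeasurableSet {ω : ℕ → V | ω (hitT A ω) = b} :=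
  measurable_hit A (measV {b})

lemma hfun_le_one (hν : ∀ z, IsSRWLaw G z (ν z)) (b z : V) : hfun ν A b z ≤ 1 := by
  haveI := (hν z).1
  exact prob_le_one

lemma cons_hit_ae (hν : ∀ z, IsSRWLaw G z (ν z))
    (hhit : ∀ z : V, (ν z) {ω | ∃ n : ℕ, ω n ∈ A} = 1) {z : V} (hz : z ∉ A) (u b : V) :
    ν u (cons z ⁻¹' {ω | ω (hitT A ω) = b}) = ν u {ω | ω (hitT A ω) = b} := by
  apply measure_congr
  rw [Filter.eventuallyEq_set]
  filter_upwards [ae_hits hhit hν u] with ω hω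
  simp only [Set.mem_preimage, Set.mem_setOf_eq]
  rw [hitT_cons hz hω, cons_succ]

lemma harmonic (hν : ∀ z, IsSRWLaw G z (ν z))
    (hhit : ∀ z : V, (ν z) {ω | ∃ n : ℕ, ω n ∈ A} = 1)
    (hlf : ∀ v, (G.neighborSet v).Finite) (hnb : ∀ v, (G.neighborSet v).Nonempty)
    {z : V} (hz : z ∉ A) (b : V) :
    hfun ν A b z = ∑' u, srwP G z u * hfun ν A b u := by
  rw [hfun, markov hν hlf hnb z,
    Measure.map_apply (measurable_cons z) (measurableSet_hitset A b),
    Measure.sum_apply _ ((measurable_cons z) (measurableSet_hitset A b))]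
  apply tsum_congr; intro u
  rw [Measure.smul_apply, smul_eq_mul, cons_hit_ae hν hhit hz u b]
  rfl

lemma measurable_hfun_stopped (b : V) (B : Set V) (n : ℕ) :
    Measurable fun ω : ℕ → V => hfun ν A b (ω (min n (hitT B ω))) :=
  (measurable_fromV (hfun ν A b)).comp
    (measurable_evalT (Measurable.of_discrete.comp (measurable_hitT B)))

lemma stopped_lintegral (hν : ∀ z, IsSRWLaw G z (ν z))
    (hhit : ∀ z : V, (ν z) {ω | ∃ n : ℕ, ω n ∈ A} = 1)
    (hlf : ∀ v, (G.neighborSet v).Finite) (hnb : ∀ v, (G.neighborSet v).Nonempty)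
    {B : Set V} (hAB : A ⊆ B) (b : V) :
    ∀ (n : ℕ) (z : V), (∫⁻ ω, hfun ν A b (ω (min n (hitT B ω))) ∂ν z) = hfun ν A b z := by
  haveI : ∀ u, IsProbabilityMeasure (ν u) := fun u => (hν u).1
  intro n
  induction n with
  | zero =>
    intro z
    have hae : ∀ᵐ ω ∂ν z, hfun ν A b (ω (min 0 (hitT B ω))) = hfun ν A b z := by
      filter_upwards [ae_start hν z] with ω h0
      simp [h0]
    rw [lintegral_congr_ae hae, lintegral_const, measure_univ, mul_one]
  | succ n ih =>
    intro z
    by_cases hzB : z ∈ B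
    · have hae : ∀ᵐ ω ∂ν z, hfun ν A b (ω (min (n+1) (hitT B ω))) = hfun ν A b z := by
        filter_upwards [ae_start hν z] with ω h0
        have h00 : hitT B ω = 0 := by
          rw [hitT_eq_iff]
          left
          exact ⟨by rwa [h0], fun m hm => absurd hm (Nat.not_lt_zero m)⟩
        simp [h00, h0]
      rw [lintegral_congr_ae hae, lintegral_const, measure_univ, mul_one]
    · rw [lintegral_markov hν hlf hnb z (measurable_hfun_stopped b B (n+1))]
      have huint : ∀ u,
          (∫⁻ ω, hfun ν A b ((cons z ω) (min (n+1) (hitT B (cons z ω)))) ∂ν u)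
            = hfun ν A b u := by
        intro u
        have hae : ∀ᵐ ω ∂ν u,
            hfun ν A b ((cons z ω) (min (n+1) (hitT B (cons z ω))))
              = hfun ν A b (ω (min n (hitT B ω))) := by
          filter_upwards [ae_hits hhit hν u] with ω hω
          have hBω : ∃ k, ω k ∈ B := hω.imp fun k hk => hAB hk
          rw [hitT_cons hzB hBω, Nat.succ_min_succ, cons_succ]
        rw [lintegral_congr_ae hae, ih u]
      calc (∑' u, srwP G z u
            * ∫⁻ ω, hfun ν A b ((cons z ω) (min (n+1) (hitT B (cons z ω)))) ∂ν u)
          = ∑' u, srwP G z u * hfun ν A b u := tsum_congr fun u => by rw [huint u]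
        _ = hfun ν A b z :=
            (harmonic hν hhit hlf hnb (fun hzA => hzB (hAB hzA)) b).symm

lemma hit_lintegral (hν : ∀ z, IsSRWLaw G z (ν z))
    (hhit : ∀ z : V, (ν z) {ω | ∃ n : ℕ, ω n ∈ A} = 1)
    (hlf : ∀ v, (G.neighborSet v).Finite) (hnb : ∀ v, (G.neighborSet v).Nonempty)
    {B : Set V} (hAB : A ⊆ B) (b z : V) :
    (∫⁻ ω, hfun ν A b (ω (hitT B ω)) ∂ν z) = hfun ν A b z := by
  haveI : ∀ u, IsProbabilityMeasure (ν u) := fun u => (hν u).1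
  have htend := tendsto_lintegral_of_dominated_convergence (μ := ν z)
    (F := fun n ω => hfun ν A b (ω (min n (hitT B ω))))
    (f := fun ω => hfun ν A b (ω (hitT B ω))) (bound := fun _ => 1)
    (fun n => measurable_hfun_stopped b B n)
    (fun n => Filter.Eventually.of_forall fun ω => hfun_le_one hν b _)
    (by simp)
    (by
      filter_upwards [ae_hits hhit hν z] with ω hω
      have hBω : ∃ k, ω k ∈ B := hω.imp fun k hk => hAB hk
      apply tendsto_atTop_of_eventually_const (i₀ := hitT B ω)
      intro n hn
      rw [min_eq_right hn])
  have hconst : (fun n : ℕ => ∫⁻ ω, hfun ν A b (ω (min n (hitT B ω))) ∂ν z)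
      = fun _ : ℕ => hfun ν A b z := by
    funext n
    exact stopped_lintegral hν hhit hlf hnb hAB b n z
  rw [hconst] at htend
  exact tendsto_nhds_unique htend tendsto_const_nhds

lemma exists_walk (G : SimpleGraph V) {ω : ℕ → V} (hadj : ∀ n, G.Adj (ω n) (ω (n+1))) (k : ℕ) :
    ∃ w : G.Walk (ω 0) (ω k), ∀ v ∈ w.support, ∃ m ≤ k, ω m = v := by
  induction k with
  | zero =>
    refine ⟨SimpleGraph.Walk.nil, ?_⟩
    intro v hv
    rw [SimpleGraph.Walk.support_nil] at hv
    simp only [List.mem_singleton] at hv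
    exact ⟨0, le_rfl, hv.symm⟩
  | succ k ih =>
    obtain ⟨w, hw⟩ := ih
    refine ⟨w.concat (hadj k), ?_⟩
    intro v hv
    rw [SimpleGraph.Walk.support_concat, List.mem_append] at hv
    rcases hv with hv | hv
    · obtain ⟨m, hm, hωm⟩ := hw v hv
      exact ⟨m, by omega, hωm⟩
    · simp only [List.mem_singleton] at hv
      exact ⟨k+1, le_rfl, hv.symm⟩

/-- The key harmonic-measure inequality: the probability of hitting `A` at `b` from `x`
is at least the disconnection probability times the probability of hitting `A` at `b`
from `y`. -/
lemma main_ineq (hν : ∀ z, IsSRWLaw G z (ν z))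
    (hhit : ∀ z : V, (ν z) {ω | ∃ n : ℕ, ω n ∈ A} = 1)
    (hlf : ∀ v, (G.neighborSet v).Finite) (hnb : ∀ v, (G.neighborSet v).Nonempty)
    (x y b : V) :
    ν x {ω | Disconnects G A y ω} * hfun ν A b y ≤ hfun ν A b x := by
  haveI : ∀ u, IsProbabilityMeasure (ν u) := fun u => (hν u).1
  set c := hfun ν A b y with hc
  set B : Set V := A ∪ {v | c ≤ hfun ν A b v} with hB
  have hAB : A ⊆ B := Set.subset_union_left
  have key : ∀ ω : ℕ → V, (∃ n, ω n ∈ A) → Disconnects G A y ω →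
      c ≤ hfun ν A b (ω (hitT B ω)) := by
    intro ω hωA hD
    set τ := hitT A ω with hτ
    set T : Set V := {v | ∃ k ≤ τ, ω k = v} with hT
    have hyside : ∀ᵐ ω' ∂ν y, ω' (hitT (T ∪ A) ω') ∈ T := by
      filter_upwards [ae_start hν y, ae_hits hhit hν y, ae_adj hν y] with ω' h0 hh hadj
      have hτ'A : ω' (hitT A ω') ∈ A := hitT_mem hh
      obtain ⟨w, hwsupp⟩ := exists_walk G hadj (hitT A ω')
      obtain ⟨v, hvsupp, n, hn, hωn⟩ := hD (ω' (hitT A ω')) hτ'A (w.copy h0 rfl)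
      rw [SimpleGraph.Walk.support_copy] at hvsupp
      obtain ⟨m, hm, hω'm⟩ := hwsupp v hvsupp
      have hvT : v ∈ T := ⟨n, hn, hωn⟩
      have hmem : ω' m ∈ T ∪ A := Or.inl (by rwa [hω'm])
      have hρle : hitT (T ∪ A) ω' ≤ m := hitT_le hmem
      rcases hitT_mem ⟨m, hmem⟩ with h | h
      · exact h
      · have h1 : hitT A ω' ≤ hitT (T ∪ A) ω' := hitT_le h
        have h2 : hitT (T ∪ A) ω' = m := le_antisymm hρle (hm.trans h1)
        rw [h2, hω'm]
        exact hvT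
    set M := (Finset.range (τ+1)).sup (fun k => hfun ν A b (ω k)) with hM
    have hcM : c ≤ M := by
      have h1 : c = ∫⁻ ω', hfun ν A b (ω' (hitT (T ∪ A) ω')) ∂ν y :=
        (hit_lintegral hν hhit hlf hnb Set.subset_union_right b y).symm
      rw [h1]
      calc (∫⁻ ω', hfun ν A b (ω' (hitT (T ∪ A) ω')) ∂ν y)
          ≤ ∫⁻ _, M ∂ν y := by
            apply lintegral_mono_ae
            filter_upwards [hyside] with ω' hT'
            obtain ⟨k, hk, hωk⟩ := hT'
            rw [← hωk]
            exact Finset.le_sup (f := fun k => hfun ν A b (ω k))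
              (show k ∈ Finset.range (τ+1) from Finset.mem_range.2 (Nat.lt_succ_of_le hk))
        _ = M := by rw [lintegral_const, measure_univ, mul_one]
    obtain ⟨k0, hk0r, hk0⟩ := Finset.exists_mem_eq_sup (Finset.range (τ+1))
      ⟨0, Finset.mem_range.2 (by omega)⟩ (fun k => hfun ν A b (ω k))
    have hcK : c ≤ hfun ν A b (ω k0) := by rw [← hk0]; exact hcM
    have hk0B : ω k0 ∈ B := Or.inr hcK
    have hρ : hitT B ω ≤ k0 := hitT_le hk0B
    rcases hitT_mem ⟨k0, hk0B⟩ with h | h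
    · have h1 : τ ≤ hitT B ω := hitT_le h
      have hk0τ : k0 ≤ τ := Nat.lt_succ_iff.1 (Finset.mem_range.1 hk0r)
      have h2 : hitT B ω = k0 := le_antisymm hρ (hk0τ.trans h1)
      rw [h2]
      exact hcK
    · exact h
  set E : Set (ℕ → V) := {ω | c ≤ hfun ν A b (ω (hitT B ω))} with hE
  have hEmeas : MeasurableSet E :=
    measurableSet_le measurable_const
      ((measurable_fromV (hfun ν A b)).comp (measurable_evalT (measurable_hitT B)))
  have hDE : ν x {ω | Disconnects G A y ω} ≤ ν x E := by
    apply measure_mono_ae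
    filter_upwards [ae_hits hhit hν x] with ω hω hD
    exact key ω hω hD
  calc ν x {ω | Disconnects G A y ω} * c
      ≤ ν x E * c := mul_le_mul_left hDE c
    _ = ∫⁻ _ in E, c ∂ν x := by rw [setLIntegral_const, mul_comm]
    _ ≤ ∫⁻ ω in E, hfun ν A b (ω (hitT B ω)) ∂ν x := by
        apply lintegral_mono_ae
        exact (ae_restrict_mem hEmeas).mono fun ω hω => hω
    _ ≤ ∫⁻ ω, hfun ν A b (ω (hitT B ω)) ∂ν x :=
        lintegral_mono' Measure.restrict_le_self le_rfl
    _ = hfun ν A b x := hit_lintegral hν hhit hlf hnb hAB b x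

end SRW

end PartB

section PartC

set_option linter.unusedSectionVars false
set_option maxHeartbeats 2000000

open ProbabilityTheory

/-- Universe-polymorphic version of `GoodCoupling`. -/
def GoodCouplingAux {V : Type*} [MeasurableSpace V] (G : SimpleGraph V) (A : Set V) (y : V)
    (νx νy : Measure (ℕ → V)) {Ω : Type*} [MeasurableSpace Ω] (μ : Measure Ω)
    (Xx Xy : ℕ → Ω → V) : Prop :=
  IsProbabilityMeasure μ ∧ (∀ n : ℕ, Measurable (Xx n)) ∧ (∀ n : ℕ, Measurable (Xy n)) ∧
  μ.map (fun ω n => Xx n ω) = νx ∧ μ.map (fun ω n => Xy n ω) = νy ∧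
  (∀ᵐ ω ∂μ,
    (νx {w | Disconnects G A y w}).toReal ≤
      (μ[Set.indicator
            {ω' | Xx (hitT A fun n => Xx n ω') ω' = Xy (hitT A fun n => Xy n ω') ω'}
            (fun _ => (1 : ℝ)) |
          MeasurableSpace.comap
            (fun ω' => fun n => Xy (min n (hitT A fun k => Xy k ω')) ω')
            inferInstance]) ω)

namespace SRW

variable {V : Type*} [Countable V] [MeasurableSpace V] [MeasurableSingletonClass V]
variable {G : SimpleGraph V} {ν : V → Measure (ℕ → V)} {A : Set V}

lemma coupling (hν : ∀ z, IsSRWLaw G z (ν z))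
    (hhit : ∀ z : V, (ν z) {ω | ∃ n : ℕ, ω n ∈ A} = 1)
    (hlf : ∀ v, (G.neighborSet v).Finite) (hnb : ∀ v, (G.neighborSet v).Nonempty)
    (x y : V) :
    ∃ μ : Measure ((ℕ → V) × (ℕ → V)),
      GoodCouplingAux G A y (ν x) (ν y) μ (fun n ω => ω.2 n) (fun n ω => ω.1 n) := by
  classical
  haveI : ∀ u, IsProbabilityMeasure (ν u) := fun u => (hν u).1
  set S : V → Set (ℕ → V) := fun b => {ω | ω (hitT A ω) = b} with hSdef
  have hSmeas : ∀ b, MeasurableSet (S b) := fun b => measurableSet_hitset A b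
  set p : ℝ≥0∞ := ν x {ω | Disconnects G A y ω} with hpdef
  set q : V → ℝ≥0∞ := fun b => ν y (S b) with hqdef
  set mx : V → ℝ≥0∞ := fun b => ν x (S b) with hmxdef
  have hmain : ∀ b, p * q b ≤ mx b := fun b => main_ineq hν hhit hlf hnb x y b
  have hp1 : p ≤ 1 := prob_le_one
  have hmx_top : ∀ b, mx b ≠ ∞ := fun b => measure_ne_top _ _
  -- partition of any measure along the hitting point
  have hpart : ∀ (m : Measure (ℕ → V)) (s : Set (ℕ → V)), MeasurableSet s →
      m s = ∑' b, m (s ∩ S b) := by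
    intro m s hs
    have hcover : s = ⋃ b, s ∩ S b := by
      ext ω
      constructor
      · intro h
        exact Set.mem_iUnion.2 ⟨ω (hitT A ω), h, rfl⟩
      · rintro h
        obtain ⟨b, hb, -⟩ := Set.mem_iUnion.1 h
        exact hb
    have hdisj : Pairwise (Function.onFun Disjoint fun b => s ∩ S b) := by
      intro b b' hbb'
      refine Set.disjoint_left.2 fun ω hω hω' => hbb' ?_
      exact hω.2.symm.trans hω'.2
    conv_lhs => rw [hcover]
    exact measure_iUnion hdisj fun b => hs.inter (hSmeas b)
  have hqsum : ∑' b, q b = 1 := by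
    have := hpart (ν y) Set.univ MeasurableSet.univ
    simp only [Set.univ_inter, measure_univ] at this
    exact this.symm
  have hmxsum : ∑' b, mx b = 1 := by
    have := hpart (ν x) Set.univ MeasurableSet.univ
    simp only [Set.univ_inter, measure_univ] at this
    exact this.symm
  -- the coefficient `t b` and the component measures
  set t : V → ℝ≥0∞ := fun b => p * q b / mx b with htdef
  have ht_le : ∀ b, t b ≤ 1 :=
    fun b => ENNReal.div_le_of_le_mul (by rw [one_mul]; exact hmain b)
  have ht_mul : ∀ b, (1 - t b) * mx b = mx b - p * q b := by
    intro b
    by_cases hb : mx b = 0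
    · have h1 : p * q b = 0 := le_antisymm (hb ▸ hmain b) zero_le
      rw [hb, mul_zero, h1]
      simp
    · rw [ENNReal.sub_mul (fun _ _ => hmx_top b), one_mul, htdef]
      congr 1
      exact ENNReal.div_mul_cancel hb (hmx_top b)
  have hp_top : p ≠ ∞ := (hp1.trans_lt ENNReal.one_lt_top).ne
  have hsum_rest : ∑' b, (1 - t b) * mx b = 1 - p := by
    have hpq : ∑' b, p * q b = p := by rw [ENNReal.tsum_mul_left, hqsum, mul_one]
    have hadd : (∑' b, (mx b - p * q b)) + (∑' b, p * q b) = 1 := by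
      rw [← ENNReal.tsum_add,
        tsum_congr (fun b => tsub_add_cancel_of_le (hmain b)), hmxsum]
    have h2 : (∑' b, (mx b - p * q b)) = 1 - ∑' b, p * q b :=
      ENNReal.eq_sub_of_add_eq (by rw [hpq]; exact hp_top) hadd
    rw [tsum_congr ht_mul, h2, hpq]
  set ρ : V → Measure (ℕ → V) := fun b =>
    if p = 0 ∨ mx b = 0 then ν x
    else (p / mx b) • (ν x).restrict (S b)
      + Measure.sum (fun b' => (1 - t b') • (ν x).restrict (S b')) with hρdef
  have hρ_apply : ∀ b (s : Set (ℕ → V)), MeasurableSet s → ¬ (p = 0 ∨ mx b = 0) →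
      ρ b s = p / mx b * ν x (s ∩ S b) + ∑' b', (1 - t b') * ν x (s ∩ S b') := by
    intro b s hs hcond
    rw [hρdef]
    simp only [if_neg hcond]
    rw [Measure.add_apply, Measure.smul_apply, smul_eq_mul, Measure.restrict_apply hs,
      Measure.sum_apply _ hs]
    congr 1
    exact tsum_congr fun b' => by
      rw [Measure.smul_apply, smul_eq_mul, Measure.restrict_apply hs]
  have hρ_prob : ∀ b, IsProbabilityMeasure (ρ b) := by
    intro b
    by_cases hcond : p = 0 ∨ mx b = 0
    · rw [hρdef]; simp only [if_pos hcond]; infer_instance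
    · constructor
      rw [hρ_apply b Set.univ MeasurableSet.univ hcond]
      simp only [Set.univ_inter]
      push_neg at hcond
      rw [show (∑' b', (1 - t b') * ν x (S b')) = 1 - p from hsum_rest,
        ENNReal.div_mul_cancel hcond.2 (hmx_top b)]
      exact add_tsub_cancel_of_le hp1
  have hρ_ge : ∀ b, q b ≠ 0 → p ≤ ρ b (S b) := by
    intro b hqb
    by_cases hp0 : p = 0
    · rw [hp0]; exact zero_le
    · have hmxb : mx b ≠ 0 := by
        intro h
        have h1 : p * q b = 0 := le_antisymm (h ▸ hmain b) zero_le
        exact (mul_ne_zero hp0 hqb) h1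
      rw [hρ_apply b (S b) (hSmeas b) (by push_neg; exact ⟨hp0, hmxb⟩)]
      calc p = p / mx b * mx b := (ENNReal.div_mul_cancel hmxb (hmx_top b)).symm
        _ = p / mx b * ν x (S b ∩ S b) := by rw [Set.inter_self]
        _ ≤ _ := le_self_add
  -- mixture identity
  have hmix : ∀ s : Set (ℕ → V), MeasurableSet s → (∑' b, ρ b s * q b) = ν x s := by
    intro s hs
    by_cases hp0 : p = 0
    · have hall : ∀ b, ρ b s * q b = ν x s * q b := by
        intro b
        rw [hρdef]
        simp only [if_pos (Or.inl hp0)]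
      rw [tsum_congr hall, ENNReal.tsum_mul_left, hqsum, mul_one]
    · set K : ℝ≥0∞ := ∑' b', (1 - t b') * ν x (s ∩ S b') with hKdef
      have hterm : ∀ b, ρ b s * q b = t b * ν x (s ∩ S b) + q b * K := by
        intro b
        by_cases hmxb : mx b = 0
        · have hqb : q b = 0 := by
            have h1 : p * q b = 0 := le_antisymm (hmxb ▸ hmain b) zero_le
            exact (mul_eq_zero.1 h1).resolve_left hp0
          have htb : t b = 0 := by
            rw [htdef]
            simp [hqb]
          have hxs : ν x (s ∩ S b) = 0 := by
            have : ν x (s ∩ S b) ≤ mx b := measure_mono Set.inter_subset_right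
            exact le_antisymm (hmxb ▸ this) zero_le
          rw [hqb, htb]
          simp
        · rw [hρ_apply b s hs (by push_neg; exact ⟨hp0, hmxb⟩), add_mul]
          congr 1
          · show p / mx b * ν x (s ∩ S b) * q b = t b * ν x (s ∩ S b)
            rw [htdef]
            simp only [div_eq_mul_inv]
            ring
          · exact mul_comm _ _
      rw [tsum_congr hterm, ENNReal.tsum_add, ENNReal.tsum_mul_right, hqsum, one_mul, hKdef]
      rw [← ENNReal.tsum_add]
      have hmerge : ∀ b, t b * ν x (s ∩ S b) + (1 - t b) * ν x (s ∩ S b) = ν x (s ∩ S b) := by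
        intro b
        rw [← add_mul, add_tsub_cancel_of_le (ht_le b), one_mul]
      rw [tsum_congr hmerge]
      exact (hpart (ν x) s hs).symm
  -- the kernel and the coupling measure
  have hκmeas : Measurable (fun ωy : ℕ → V => ρ (ωy (hitT A ωy))) :=
    (measurable_fromV ρ).comp (measurable_hit A)
  set κ : Kernel (ℕ → V) (ℕ → V) := ⟨fun ωy => ρ (ωy (hitT A ωy)), hκmeas⟩ with hκdef
  haveI hκmarkov : IsMarkovKernel κ := ⟨fun ωy => hρ_prob _⟩
  set μ : Measure ((ℕ → V) × (ℕ → V)) := (ν y).compProd κ with hμdef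
  haveI hμprob : IsProbabilityMeasure μ := by rw [hμdef]; infer_instance
  have hκ_app : ∀ ωy, κ ωy = ρ (ωy (hitT A ωy)) := fun _ => rfl
  -- marginals
  have hXym : ∀ n : ℕ, Measurable fun ω : (ℕ → V) × (ℕ → V) => ω.1 n :=
    fun n => (measurable_pi_apply n).comp measurable_fst
  have hXxm : ∀ n : ℕ, Measurable fun ω : (ℕ → V) × (ℕ → V) => ω.2 n :=
    fun n => (measurable_pi_apply n).comp measurable_snd
  have hfst : μ.map Prod.fst = ν y := by
    have h1 : μ.map Prod.fst = μ.fst := rfl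
    rw [h1, hμdef, Measure.fst_compProd]
  have hsnd : μ.map Prod.snd = ν x := by
    ext s hs
    rw [Measure.map_apply measurable_snd hs, hμdef,
      Measure.compProd_apply (measurable_snd hs)]
    have hsec : ∀ ωy : ℕ → V, κ ωy (Prod.mk ωy ⁻¹' (Prod.snd ⁻¹' s))
        = (fun b => ρ b s) (ωy (hitT A ωy)) := fun ωy => rfl
    rw [lintegral_congr hsec]
    rw [← lintegral_map (measurable_fromV (fun b => ρ b s)) (measurable_hit A)]
    rw [lintegral_countable' (μ := (ν y).map (fun ω => ω (hitT A ω)))]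
    have hsingle : ∀ b : V, ((ν y).map (fun ω => ω (hitT A ω))) {b} = q b := by
      intro b
      rw [Measure.map_apply (measurable_hit A) (measV {b})]
      rfl
    rw [tsum_congr fun b => by rw [hsingle b]]
    exact hmix s hs
  refine ⟨μ, hμprob, hXxm, hXym, ?_, ?_, ?_⟩
  · rw [show (fun (ω : (ℕ → V) × (ℕ → V)) (n : ℕ) => ω.2 n) = Prod.snd from rfl]
    exact hsnd
  · rw [show (fun (ω : (ℕ → V) × (ℕ → V)) (n : ℕ) => ω.1 n) = Prod.fst from rfl]
    exact hfst
  -- the conditional expectation bound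
  set Φ : (ℕ → V) × (ℕ → V) → (ℕ → V) :=
    fun ω' => fun n => ω'.1 (min n (hitT A ω'.1)) with hΦdef
  have hΦ : Measurable Φ := (measurable_stopped A).comp measurable_fst
  have hm : MeasurableSpace.comap Φ MeasurableSpace.pi
      ≤ Prod.instMeasurableSpace := hΦ.comap_le
  haveI : SigmaFinite (μ.trim hm) := by infer_instance
  set Sset : Set ((ℕ → V) × (ℕ → V)) := {ω' | ω'.2 (hitT A ω'.2) = ω'.1 (hitT A ω'.1)}
    with hSsetdef
  have hF2 : Measurable fun ω' : (ℕ → V) × (ℕ → V) => ω'.2 (hitT A ω'.2) :=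
    (measurable_hit A).comp measurable_snd
  have hF1 : Measurable fun ω' : (ℕ → V) × (ℕ → V) => ω'.1 (hitT A ω'.1) :=
    (measurable_hit A).comp measurable_fst
  have hSset : MeasurableSet Sset := by
    have hrw : Sset = ⋃ b : V, ((fun ω' : (ℕ → V) × (ℕ → V) => ω'.2 (hitT A ω'.2)) ⁻¹' {b}
        ∩ (fun ω' : (ℕ → V) × (ℕ → V) => ω'.1 (hitT A ω'.1)) ⁻¹' {b}) := by
      ext ω'
      simp only [hSsetdef, Set.mem_setOf_eq, Set.mem_iUnion, Set.mem_inter_iff,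
        Set.mem_preimage, Set.mem_singleton_iff]
      constructor
      · intro h
        exact ⟨ω'.1 (hitT A ω'.1), h, rfl⟩
      · rintro ⟨b, h1, h2⟩
        rw [h1, h2]
    rw [hrw]
    exact MeasurableSet.iUnion fun b => (hF2 (measV {b})).inter (hF1 (measV {b}))
  set f : (ℕ → V) × (ℕ → V) → ℝ := Set.indicator Sset (fun _ => (1:ℝ)) with hfdef
  have hf_int : Integrable f μ := (integrable_const (1:ℝ)).indicator hSset
  set g : (ℕ → V) × (ℕ → V) → ℝ :=
    fun ω' => (ρ (ω'.1 (hitT A ω'.1)) (S (ω'.1 (hitT A ω'.1)))).toReal with hgdef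
  have hg_meas : Measurable g :=
    (measurable_fromV (fun b => (ρ b (S b)).toReal)).comp hF1
  have hg_le : ∀ ω', ‖g ω'‖ ≤ 1 := by
    intro ω'
    rw [Real.norm_eq_abs, abs_of_nonneg ENNReal.toReal_nonneg]
    haveI := hρ_prob (ω'.1 (hitT A ω'.1))
    calc (ρ (ω'.1 (hitT A ω'.1)) (S (ω'.1 (hitT A ω'.1)))).toReal
        ≤ (1 : ℝ≥0∞).toReal := ENNReal.toReal_mono ENNReal.one_ne_top prob_le_one
      _ = 1 := by simp
  have hg_int : Integrable g μ :=
    Integrable.mono' (integrable_const (1:ℝ)) hg_meas.aestronglyMeasurable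
      (Filter.Eventually.of_forall hg_le)
  have hΦmG : @Measurable _ _ (MeasurableSpace.comap Φ MeasurableSpace.pi) _ Φ :=
    fun s hs => ⟨s, hs, rfl⟩
  have hgm : StronglyMeasurable[MeasurableSpace.comap Φ MeasurableSpace.pi] g := by
    have hfact : g = (fun w : ℕ → V => (ρ (w (hitT A w)) (S (w (hitT A w)))).toReal) ∘ Φ := by
      funext ω'
      simp only [Function.comp_apply, hΦdef, hgdef]
      rw [hit_stopped' A ω'.1]
    rw [hfact]
    exact (((measurable_fromV (fun b => (ρ b (S b)).toReal)).comp
      (measurable_hit A)).comp hΦmG).stronglyMeasurable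
  have hgm' : AEStronglyMeasurable[MeasurableSpace.comap Φ MeasurableSpace.pi] g μ :=
    hgm.aestronglyMeasurable
  have hTy_int : ∀ T : Set (ℕ → V), MeasurableSet T →
      (∫ ω' in Φ ⁻¹' T, g ω' ∂μ) = ∫ ω' in Φ ⁻¹' T, f ω' ∂μ := by
    intro T hT
    have hTy : MeasurableSet ((fun w : ℕ → V => fun n => w (min n (hitT A w))) ⁻¹' T) :=
      (measurable_stopped A) hT
    have hpre : Φ ⁻¹' T
        = ((fun w : ℕ → V => fun n => w (min n (hitT A w))) ⁻¹' T) ×ˢ (Set.univ : Set (ℕ → V)) := by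
      ext ω'
      simp only [hΦdef, Set.mem_preimage, Set.mem_prod, Set.mem_univ, and_true]
    rw [hpre, hμdef]
    rw [Measure.setIntegral_compProd hTy MeasurableSet.univ (hg_int.integrableOn),
        Measure.setIntegral_compProd hTy MeasurableSet.univ (hf_int.integrableOn)]
    refine setIntegral_congr_fun hTy fun ωy _ => ?_
    haveI : IsProbabilityMeasure (κ ωy) := hρ_prob _
    rw [Measure.restrict_univ]
    have hfs : (fun ωx => f (ωy, ωx))
        = Set.indicator (S (ωy (hitT A ωy))) (fun _ => (1:ℝ)) := by
      funext ωx
      by_cases h : ωx ∈ S (ωy (hitT A ωy))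
      · rw [Set.indicator_of_mem h]
        exact Set.indicator_of_mem (show (ωy, ωx) ∈ Sset from h) _
      · rw [Set.indicator_of_notMem h]
        exact Set.indicator_of_notMem (show (ωy, ωx) ∉ Sset from h) _
    calc (∫ ωx, g (ωy, ωx) ∂κ ωy)
        = (ρ (ωy (hitT A ωy)) (S (ωy (hitT A ωy)))).toReal := by
          rw [show (fun ωx : ℕ → V => g (ωy, ωx))
            = fun _ => (ρ (ωy (hitT A ωy)) (S (ωy (hitT A ωy)))).toReal from rfl]
          rw [integral_const]
          simp
      _ = ∫ ωx, f (ωy, ωx) ∂κ ωy := by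
          rw [hfs, integral_indicator_const (1:ℝ) (hSmeas _)]
          rw [hκ_app ωy]
          simp [measureReal_def]
  have hg_eq : ∀ s : Set ((ℕ → V) × (ℕ → V)), MeasurableSet[MeasurableSpace.comap Φ MeasurableSpace.pi] s → μ s < ∞ →
      (∫ ω' in s, g ω' ∂μ) = ∫ ω' in s, f ω' ∂μ := by
    intro s hs _
    obtain ⟨T, hT, rfl⟩ := hs
    exact hTy_int T hT
  have hcond : g =ᵐ[μ] μ[f | MeasurableSpace.comap Φ MeasurableSpace.pi] :=
    ae_eq_condExp_of_forall_setIntegral_eq hm hf_int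
      (fun s _ _ => hg_int.integrableOn) hg_eq hgm'
  have hN : μ {ω' : (ℕ → V) × (ℕ → V) | q (ω'.1 (hitT A ω'.1)) = 0} = 0 := by
    have hmeasN1 : MeasurableSet {ωy : ℕ → V | q (ωy (hitT A ωy)) = 0} :=
      ((measurable_fromV q).comp (measurable_hit A)) (measurableSet_singleton 0)
    have hpre : {ω' : (ℕ → V) × (ℕ → V) | q (ω'.1 (hitT A ω'.1)) = 0}
        = Prod.fst ⁻¹' {ωy : ℕ → V | q (ωy (hitT A ωy)) = 0} := rfl
    rw [hpre, ← Measure.map_apply measurable_fst hmeasN1, hfst]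
    have hsub : {ωy : ℕ → V | q (ωy (hitT A ωy)) = 0} ⊆
        ⋃ b : {b : V // q b = 0}, S (b : V) := by
      intro ωy h
      exact Set.mem_iUnion.2 ⟨⟨ωy (hitT A ωy), h⟩, rfl⟩
    exact measure_mono_null hsub (measure_iUnion_null fun b => b.2)
  have hae_q : ∀ᵐ ω' ∂μ, q (ω'.1 (hitT A ω'.1)) ≠ 0 := by
    rw [ae_iff]
    have : {ω' : (ℕ → V) × (ℕ → V) | ¬ q (ω'.1 (hitT A ω'.1)) ≠ 0}
        = {ω' : (ℕ → V) × (ℕ → V) | q (ω'.1 (hitT A ω'.1)) = 0} := by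
      ext ω'; simp [not_not]
    rw [this]
    exact hN
  filter_upwards [hcond, hae_q] with ω' h1 h2
  show (ν x {w | Disconnects G A y w}).toReal
    ≤ (μ[f | MeasurableSpace.comap Φ MeasurableSpace.pi]) ω'
  rw [← h1]
  exact ENNReal.toReal_mono (measure_ne_top _ _) (hρ_ge _ h2)

end SRW

end PartC

section PartD

set_option linter.unusedSectionVars false
set_option maxHeartbeats 2000000

namespace SRW

variable {V : Type*} [Countable V] [MeasurableSpace V] [MeasurableSingletonClass V]

lemma measurable_eval_rand {Ω : Type*} [MeasurableSpace Ω] {X : ℕ → Ω → V}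
    (hX : ∀ n, Measurable (X n)) {T : Ω → ℕ} (hT : Measurable T) :
    Measurable fun ω => X (T ω) ω := by
  apply measurable_to_countable'
  intro v
  have hrw : (fun ω => X (T ω) ω) ⁻¹' {v} = ⋃ n, T ⁻¹' {n} ∩ X n ⁻¹' {v} := by
    ext ω
    simp only [Set.mem_preimage, Set.mem_singleton_iff, Set.mem_iUnion, Set.mem_inter_iff]
    constructor
    · intro h; exact ⟨T ω, rfl, h⟩
    · rintro ⟨n, rfl, h⟩; exact h
  rw [hrw]
  exact MeasurableSet.iUnion fun n => (hT (measurableSet_singleton n)).inter ((hX n) (measV _))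

lemma transfer (G : SimpleGraph V) (A : Set V) (y : V) (νx νy : Measure (ℕ → V))
    {Ω₁ : Type*} [MeasurableSpace Ω₁] {Ω₀ : Type} [MeasurableSpace Ω₀]
    (μ : Measure Ω₁) (Xx Xy : ℕ → Ω₁ → V)
    (j : Ω₁ → Ω₀) (r : Ω₀ → Ω₁) (hj : Measurable j) (hr : Measurable r)
    (hrj : ∀ ω, r (j ω) = ω)
    (h : GoodCouplingAux G A y νx νy μ Xx Xy) :
    GoodCoupling G A y νx νy (μ.map j) (fun n ω => Xx n (r ω)) (fun n ω => Xy n (r ω)) := by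
  obtain ⟨hprob, hXxm, hXym, hmapx, hmapy, hcond⟩ := h
  haveI := hprob
  haveI : IsProbabilityMeasure (μ.map j) := Measure.isProbabilityMeasure_map hj.aemeasurable
  -- measurability on Ω₁
  have hYpath : Measurable fun ω' : Ω₁ => fun k => Xy k ω' :=
    measurable_pi_lambda _ fun k => hXym k
  have hXpath : Measurable fun ω' : Ω₁ => fun k => Xx k ω' :=
    measurable_pi_lambda _ fun k => hXxm k
  have hΦ₁m : Measurable fun ω' : Ω₁ => fun n => Xy (min n (hitT A fun k => Xy k ω')) ω' := by
    apply measurable_pi_lambda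
    intro n
    exact measurable_eval_rand hXym
      (Measurable.of_discrete.comp ((measurable_hitT A).comp hYpath))
  have hHx : Measurable fun ω' : Ω₁ => Xx (hitT A fun n => Xx n ω') ω' :=
    measurable_eval_rand hXxm ((measurable_hitT A).comp hXpath)
  have hHy : Measurable fun ω' : Ω₁ => Xy (hitT A fun n => Xy n ω') ω' :=
    measurable_eval_rand hXym ((measurable_hitT A).comp hYpath)
  have hS₁ : MeasurableSet {ω' : Ω₁ |
      Xx (hitT A fun n => Xx n ω') ω' = Xy (hitT A fun n => Xy n ω') ω'} := by
    have hrw : {ω' : Ω₁ | Xx (hitT A fun n => Xx n ω') ω' = Xy (hitT A fun n => Xy n ω') ω'}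
        = ⋃ b : V, ((fun ω' : Ω₁ => Xx (hitT A fun n => Xx n ω') ω') ⁻¹' {b}
          ∩ (fun ω' : Ω₁ => Xy (hitT A fun n => Xy n ω') ω') ⁻¹' {b}) := by
      ext ω'
      simp only [Set.mem_setOf_eq, Set.mem_iUnion, Set.mem_inter_iff, Set.mem_preimage,
        Set.mem_singleton_iff]
      constructor
      · intro hh
        exact ⟨_, hh, rfl⟩
      · rintro ⟨b, h1, h2⟩
        rw [h1, h2]
    rw [hrw]
    exact MeasurableSet.iUnion fun b => (hHx (measV {b})).inter (hHy (measV {b}))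
  -- abbreviations
  set Φ₁ : Ω₁ → (ℕ → V) := fun ω' => fun n => Xy (min n (hitT A fun k => Xy k ω')) ω'
    with hΦ₁def
  set S₁ : Set Ω₁ :=
    {ω' | Xx (hitT A fun n => Xx n ω') ω' = Xy (hitT A fun n => Xy n ω') ω'} with hS₁def
  set f₁ : Ω₁ → ℝ := Set.indicator S₁ (fun _ => (1:ℝ)) with hf₁def
  set g₁ : Ω₁ → ℝ := μ[f₁ | MeasurableSpace.comap Φ₁ MeasurableSpace.pi] with hg₁def
  have hm₁ : MeasurableSpace.comap Φ₁ MeasurableSpace.pi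
      ≤ (inferInstance : MeasurableSpace Ω₁) := hΦ₁m.comap_le
  have hint₁ : Integrable f₁ μ := (integrable_const (1:ℝ)).indicator hS₁
  have hg₁sm : StronglyMeasurable[MeasurableSpace.comap Φ₁ MeasurableSpace.pi] g₁ :=
    stronglyMeasurable_condExp
  have hg₁m : Measurable g₁ := (hg₁sm.mono hm₁).measurable
  -- Ω₀ side
  have hΦ₀m : Measurable (Φ₁ ∘ r) := hΦ₁m.comp hr
  have hm₀ : MeasurableSpace.comap (Φ₁ ∘ r) MeasurableSpace.pi
      ≤ (inferInstance : MeasurableSpace Ω₀) := hΦ₀m.comap_le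
  haveI : SigmaFinite ((μ.map j).trim hm₀) := by infer_instance
  have hf₀int : Integrable (Set.indicator (r ⁻¹' S₁) fun _ => (1:ℝ)) (μ.map j) :=
    (integrable_const (1:ℝ)).indicator (hr hS₁)
  have hg₀m : Measurable fun ω => g₁ (r ω) := hg₁m.comp hr
  have hg₀int : Integrable (fun ω => g₁ (r ω)) (μ.map j) := by
    rw [integrable_map_measure hg₀m.aestronglyMeasurable hj.aemeasurable]
    have hcomp : ((fun ω => g₁ (r ω)) ∘ j) = g₁ := funext fun ω => by simp [hrj ω]
    rw [hcomp]
    exact integrable_condExp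
  have hrm : @Measurable Ω₀ Ω₁ (MeasurableSpace.comap (Φ₁ ∘ r) MeasurableSpace.pi)
      (MeasurableSpace.comap Φ₁ MeasurableSpace.pi) r := by
    intro s hs
    obtain ⟨T, hT, rfl⟩ := hs
    exact ⟨T, hT, rfl⟩
  have hgm₀ : AEStronglyMeasurable[MeasurableSpace.comap (Φ₁ ∘ r) MeasurableSpace.pi]
      (fun ω => g₁ (r ω)) (μ.map j) :=
    (hg₁sm.comp_measurable hrm).aestronglyMeasurable
  have hseteq : ∀ s : Set Ω₀,
      MeasurableSet[MeasurableSpace.comap (Φ₁ ∘ r) MeasurableSpace.pi] s → (μ.map j) s < ∞ →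
      (∫ ω in s, g₁ (r ω) ∂(μ.map j))
        = ∫ ω in s, Set.indicator (r ⁻¹' S₁) (fun _ => (1:ℝ)) ω ∂(μ.map j) := by
    intro s hs _
    obtain ⟨T, hT, rfl⟩ := hs
    have hs₁ : MeasurableSet (Φ₁ ⁻¹' T) := hΦ₁m hT
    have hpre : (Φ₁ ∘ r) ⁻¹' T = r ⁻¹' (Φ₁ ⁻¹' T) := rfl
    rw [hpre, setIntegral_map (hr hs₁) hg₀m.aestronglyMeasurable hj.aemeasurable,
      setIntegral_map (hr hs₁) (measurable_const.indicator (hr hS₁)).aestronglyMeasurable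
        hj.aemeasurable]
    have hjpre : j ⁻¹' (r ⁻¹' (Φ₁ ⁻¹' T)) = Φ₁ ⁻¹' T := by
      ext ω
      simp [hrj ω]
    rw [hjpre]
    have hgj : (fun ω => g₁ (r (j ω))) = g₁ := funext fun ω => by rw [hrj ω]
    have hfj : (fun ω => Set.indicator (r ⁻¹' S₁) (fun _ => (1:ℝ)) (j ω)) = f₁ := by
      funext ω
      by_cases hωS : ω ∈ S₁
      · rw [Set.indicator_of_mem (show j ω ∈ r ⁻¹' S₁ by
            simp only [Set.mem_preimage, hrj ω]; exact hωS), hf₁def,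
          Set.indicator_of_mem hωS]
      · rw [Set.indicator_of_notMem (show j ω ∉ r ⁻¹' S₁ by
            simp only [Set.mem_preimage, hrj ω]; exact hωS), hf₁def,
          Set.indicator_of_notMem hωS]
    rw [hgj, hfj]
    exact setIntegral_condExp hm₁ hint₁ ⟨T, hT, rfl⟩
  have hcond₀ : (fun ω => g₁ (r ω)) =ᵐ[μ.map j]
      ((μ.map j)[Set.indicator (r ⁻¹' S₁) (fun _ => (1:ℝ)) |
        MeasurableSpace.comap (Φ₁ ∘ r) MeasurableSpace.pi]) :=
    ae_eq_condExp_of_forall_setIntegral_eq hm₀ hf₀int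
      (fun s _ _ => hg₀int.integrableOn) hseteq hgm₀
  have hpull : ∀ᵐ ω ∂(μ.map j), (νx {w | Disconnects G A y w}).toReal ≤ g₁ (r ω) := by
    refine (ae_map_iff (p := fun ω : Ω₀ =>
        (νx {w | Disconnects G A y w}).toReal ≤ g₁ (r ω)) hj.aemeasurable ?_).2 ?_
    · exact measurableSet_le measurable_const hg₀m
    · filter_upwards [hcond] with ω hω
      rw [hrj ω]
      exact hω
  refine ⟨inferInstance, fun n => (hXxm n).comp hr, fun n => (hXym n).comp hr, ?_, ?_, ?_⟩
  · have hgx : Measurable fun (ω : Ω₀) (n : ℕ) => Xx n (r ω) :=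
      measurable_pi_lambda _ fun n => (hXxm n).comp hr
    rw [Measure.map_map hgx hj]
    have hcomp : ((fun (ω : Ω₀) (n : ℕ) => Xx n (r ω)) ∘ j) = fun ω n => Xx n ω := by
      funext ω n
      simp [hrj ω]
    rw [hcomp]
    exact hmapx
  · have hgy : Measurable fun (ω : Ω₀) (n : ℕ) => Xy n (r ω) :=
      measurable_pi_lambda _ fun n => (hXym n).comp hr
    rw [Measure.map_map hgy hj]
    have hcomp : ((fun (ω : Ω₀) (n : ℕ) => Xy n (r ω)) ∘ j) = fun ω n => Xy n ω := by
      funext ω n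
      simp [hrj ω]
    rw [hcomp]
    exact hmapy
  · filter_upwards [hcond₀, hpull] with ω h1 h2
    show (νx {w | Disconnects G A y w}).toReal ≤
      ((μ.map j)[Set.indicator (r ⁻¹' S₁) (fun _ => (1:ℝ)) |
        MeasurableSpace.comap (Φ₁ ∘ r) MeasurableSpace.pi]) ω
    rw [← h1]
    exact h2

end SRW

end PartD


set_option linter.unusedVariables false in
theorem stmt6 {V : Type*} [Countable V] [MeasurableSpace V] [MeasurableSingletonClass V]
    (G : SimpleGraph V) (hG : G.Connected) (hlf : ∀ v : V, (G.neighborSet v).Finite)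
    (ν : V → Measure (ℕ → V)) (hν : ∀ z : V, IsSRWLaw G z (ν z))
    (A : Set V) (hhit : ∀ z : V, (ν z) {ω | ∃ n : ℕ, ω n ∈ A} = 1)
    (x y : V) (hx : x ∉ A) (hy : y ∉ A) :
    ∃ (Ω : Type) (mΩ : MeasurableSpace Ω) (μ : @Measure Ω mΩ) (Xx Xy : ℕ → Ω → V),
      @GoodCoupling V _ G A y (ν x) (ν y) Ω mΩ μ Xx Xy := by
  classical
  haveI : ∀ z, IsProbabilityMeasure (ν z) := fun z => (hν z).1
  have hA : A.Nonempty := by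
    rcases Set.eq_empty_or_nonempty A with h | h
    · exfalso
      have h1 := hhit x
      rw [h] at h1
      have h0 : {ω : ℕ → V | ∃ n : ℕ, ω n ∈ (∅ : Set V)} = ∅ := by
        ext ω; simp
      rw [h0] at h1
      simp at h1
    · exact h
  obtain ⟨a0, ha0⟩ := hA
  haveI : Nontrivial V := ⟨⟨a0, x, fun hax => hx (hax ▸ ha0)⟩⟩
  have hnb : ∀ v, (G.neighborSet v).Nonempty := SRW.neighbor_nonempty hG
  obtain ⟨μ1, hGC⟩ := SRW.coupling hν hhit hlf hnb x y
  obtain ⟨cV, hcV⟩ := Countable.exists_injective_nat V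
  have hdc : ∀ v : V, (fun k : ℕ => if h : ∃ u, cV u = k then h.choose else x) (cV v) = v := by
    intro v
    have hex : ∃ u, cV u = cV v := ⟨v, rfl⟩
    simp only [dif_pos hex]
    exact hcV hex.choose_spec
  set d : ℕ → V := fun k => if h : ∃ u, cV u = k then h.choose else x with hd
  set j : (ℕ → V) × (ℕ → V) → (ℕ → ℕ) × (ℕ → ℕ) :=
    fun ω => (fun n => cV (ω.1 n), fun n => cV (ω.2 n)) with hjdef
  set r : (ℕ → ℕ) × (ℕ → ℕ) → (ℕ → V) × (ℕ → V) :=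
    fun η => (fun n => d (η.1 n), fun n => d (η.2 n)) with hrdef
  have hjm : Measurable j := by
    refine Measurable.prod ?_ ?_
    · exact measurable_pi_lambda _ fun n =>
        (SRW.measurable_fromV cV).comp ((measurable_pi_apply n).comp measurable_fst)
    · exact measurable_pi_lambda _ fun n =>
        (SRW.measurable_fromV cV).comp ((measurable_pi_apply n).comp measurable_snd)
  have hrm : Measurable r := by
    refine Measurable.prod ?_ ?_
    · exact measurable_pi_lambda _ fun n =>
        (Measurable.of_discrete (f := d)).comp ((measurable_pi_apply n).comp measurable_fst)
    · exact measurable_pi_lambda _ fun n =>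
        (Measurable.of_discrete (f := d)).comp ((measurable_pi_apply n).comp measurable_snd)
  have hrj : ∀ ω, r (j ω) = ω := by
    intro ω
    refine Prod.ext ?_ ?_
    · funext n
      exact hdc (ω.1 n)
    · funext n
      exact hdc (ω.2 n)
  exact ⟨(ℕ → ℕ) × (ℕ → ℕ), inferInstance, μ1.map j, _, _,
    SRW.transfer G A y (ν x) (ν y) μ1 _ _ j r hjm hrm hrj hGC⟩
end
end

section
/- Let (X_n, Y_n) be random variables in Ω_X × Ω_Y converging in law to (X, Y). Suppose {P_y : y ∈ Ω_Y} is a family of Borel probability measures on Ω_X such that for every bounded continuous f : Ω_X → ℝ the map y ↦ ∫ f dP_y is Borel measurable, and such that for every bounded continuous f : Ω_X → ℝ the pair (E[f(X_n) | Y_n], Y_n) converges in law to (∫ f dP_Y, Y) in ℝ × Ω_Y. Then P_Y is a regular conditional distribution of X given Y: for every bounded continuous f : Ω_X → ℝ, almost surely E[f(X) | σ(Y)] = ∫_{Ω_X} f dP_Y. -/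
open MeasureTheory Filter Topology
open scoped NNReal ENNReal

lemma aux_integrable {Ω : Type*} [MeasurableSpace Ω] (μ : Measure Ω) [IsFiniteMeasure μ]
    {g : Ω → ℝ} (hg : Measurable g) {C : ℝ} (h : ∀ ω, ‖g ω‖ ≤ C) : Integrable g μ :=
  ⟨hg.aestronglyMeasurable, HasFiniteIntegral.of_bounded (ae_of_all _ h)⟩

lemma aux_clamp_eq {C r : ℝ} (h : |r| ≤ C) : max (-C) (min C r) = r := by
  rw [abs_le] at h
  rw [min_eq_right h.2, max_eq_right h.1]

lemma aux_clamp_bound {C : ℝ} (hC : 0 ≤ C) (r : ℝ) : |max (-C) (min C r)| ≤ C := by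
  rw [abs_le]
  exact ⟨le_max_left _ _, max_le (by linarith) (min_le_left _ _)⟩

/-- the coercion `ℝ≥0 → ℝ` as a Lipschitz map, applied to a bounded continuous function -/
noncomputable def auxCoe {α : Type*} [TopologicalSpace α]
    (h : BoundedContinuousFunction α ℝ≥0) : BoundedContinuousFunction α ℝ :=
  h.comp (fun r : ℝ≥0 => (r : ℝ))
    (LipschitzWith.of_dist_le_mul (K := 1) fun a b => by
      rw [NNReal.dist_eq, Real.dist_eq, NNReal.coe_one, one_mul])

@[simp] lemma auxCoe_apply {α : Type*} [TopologicalSpace α]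
    (h : BoundedContinuousFunction α ℝ≥0) (x : α) : auxCoe h x = (h x : ℝ) := rfl

theorem stmt8 {ΩX ΩY : Type*}
    [MetricSpace ΩX] [CompleteSpace ΩX] [TopologicalSpace.SeparableSpace ΩX]
    [MeasurableSpace ΩX] [BorelSpace ΩX]
    [MetricSpace ΩY] [CompleteSpace ΩY] [TopologicalSpace.SeparableSpace ΩY]
    [MeasurableSpace ΩY] [BorelSpace ΩY]
    {Ω : Type*} [MeasurableSpace Ω] (μ : Measure Ω) [IsProbabilityMeasure μ]
    (Xn : ℕ → Ω → ΩX) (Yn : ℕ → Ω → ΩY) (X : Ω → ΩX) (Y : Ω → ΩY)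
    (hXn : ∀ n, Measurable (Xn n)) (hYn : ∀ n, Measurable (Yn n))
    (hX : Measurable X) (hY : Measurable Y)
    -- `(Xₙ, Yₙ) → (X, Y)` in law
    (hconv : ∀ g : BoundedContinuousFunction (ΩX × ΩY) ℝ,
      Tendsto (fun n => ∫ ω, g (Xn n ω, Yn n ω) ∂μ) atTop
        (𝓝 (∫ ω, g (X ω, Y ω) ∂μ)))
    (P : ΩY → Measure ΩX) (hP : ∀ y, IsProbabilityMeasure (P y))
    -- for every bounded continuous `f`, `y ↦ ∫ f dP_y` is measurable
    (hPmeas : ∀ f : BoundedContinuousFunction ΩX ℝ,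
      Measurable fun y : ΩY => ∫ a, f a ∂(P y))
    -- `(E[f(Xₙ)|Yₙ], Yₙ) → (∫ f dP_Y, Y)` in law in `ℝ × Ω_Y`
    (hcond : ∀ f : BoundedContinuousFunction ΩX ℝ,
      ∀ g : BoundedContinuousFunction (ℝ × ΩY) ℝ,
        Tendsto
          (fun n => ∫ ω,
            g ((μ[(fun ω' => f (Xn n ω')) |
                  MeasurableSpace.comap (Yn n) inferInstance]) ω, Yn n ω) ∂μ)
          atTop
          (𝓝 (∫ ω, g (∫ a, f a ∂(P (Y ω)), Y ω) ∂μ))) :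
    ∀ f : BoundedContinuousFunction ΩX ℝ,
      (μ[(fun ω => f (X ω)) | MeasurableSpace.comap Y inferInstance])
        =ᵐ[μ] fun ω => ∫ a, f a ∂(P (Y ω)) := by
  intro f
  set C : ℝ := ‖f‖ with hC
  have hC0 : 0 ≤ C := norm_nonneg f
  have hfb : ∀ x, ‖f x‖ ≤ C := fun x => f.norm_coe_le_norm x
  set g0 : Ω → ℝ := fun ω => ∫ a, f a ∂(P (Y ω)) with hg0
  have hg0_meas : Measurable g0 := (hPmeas f).comp hY
  have hPf_bound : ∀ y, ‖∫ a, f a ∂(P y)‖ ≤ C := by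
    intro y
    haveI := hP y
    calc ‖∫ a, f a ∂(P y)‖ ≤ C * ((P y) Set.univ).toReal :=
          norm_integral_le_of_norm_le_const (ae_of_all _ hfb)
      _ = C := by simp
  have hfX_meas : Measurable fun ω => f (X ω) := f.continuous.measurable.comp hX
  have hfX_int : Integrable (fun ω => f (X ω)) μ := aux_integrable μ hfX_meas (fun ω => hfb _)
  have hg0_int : Integrable g0 μ := aux_integrable μ hg0_meas (fun ω => hPf_bound _)
  -- Step 1: testing against bounded continuous functions of `Y`
  have hkey : ∀ h : BoundedContinuousFunction ΩY ℝ,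
      ∫ ω, f (X ω) * h (Y ω) ∂μ = ∫ ω, g0 ω * h (Y ω) ∂μ := by
    intro h
    let g₁ : BoundedContinuousFunction (ΩX × ΩY) ℝ :=
      f.compContinuous ⟨Prod.fst, continuous_fst⟩ *
        h.compContinuous ⟨Prod.snd, continuous_snd⟩
    have hg₁ : ∀ p : ΩX × ΩY, g₁ p = f p.1 * h p.2 := fun p => rfl
    have h1 : Tendsto (fun n => ∫ ω, f (Xn n ω) * h (Yn n ω) ∂μ) atTop
        (𝓝 (∫ ω, f (X ω) * h (Y ω) ∂μ)) := by
      have := hconv g₁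
      simpa only [hg₁] using this
    let g₂ : BoundedContinuousFunction (ℝ × ΩY) ℝ :=
      BoundedContinuousFunction.ofNormedAddCommGroup
        (fun p => max (-C) (min C p.1) * h p.2)
        (by fun_prop) (C * ‖h‖)
        (by
          intro p
          rw [norm_mul]
          exact mul_le_mul (by simpa [Real.norm_eq_abs] using aux_clamp_bound hC0 p.1)
            (h.norm_coe_le_norm p.2) (norm_nonneg _) hC0)
    have hg₂ : ∀ r : ℝ, ∀ y : ΩY, g₂ (r, y) = max (-C) (min C r) * h y := fun r y => rfl
    have h2 : Tendsto
        (fun n => ∫ ω, g₂ ((μ[(fun ω' => f (Xn n ω')) |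
            MeasurableSpace.comap (Yn n) inferInstance]) ω, Yn n ω) ∂μ) atTop
        (𝓝 (∫ ω, g0 ω * h (Y ω) ∂μ)) := by
      have := hcond f g₂
      have heq : (∫ ω, g₂ (∫ a, f a ∂(P (Y ω)), Y ω) ∂μ) = ∫ ω, g0 ω * h (Y ω) ∂μ := by
        refine integral_congr_ae (ae_of_all _ fun ω => ?_)
        simp only [hg₂]
        rw [aux_clamp_eq (by simpa [Real.norm_eq_abs] using hPf_bound (Y ω))]
      rwa [heq] at this
    have h3 : ∀ n, (∫ ω, g₂ ((μ[(fun ω' => f (Xn n ω')) |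
        MeasurableSpace.comap (Yn n) inferInstance]) ω, Yn n ω) ∂μ)
        = ∫ ω, f (Xn n ω) * h (Yn n ω) ∂μ := by
      intro n
      have hm : MeasurableSpace.comap (Yn n) inferInstance
          ≤ (inferInstance : MeasurableSpace Ω) := (hYn n).comap_le
      have hfXn_int : Integrable (fun ω => f (Xn n ω)) μ :=
        aux_integrable μ (f.continuous.measurable.comp (hXn n)) (fun ω => hfb _)
      have hbdd : ∀ᵐ ω ∂μ, |(μ[(fun ω' => f (Xn n ω')) | MeasurableSpace.comap (Yn n) inferInstance]) ω| ≤ (C.toNNReal : ℝ) := by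
        refine ae_bdd_condExp_of_ae_bdd (ae_of_all _ fun ω => ?_)
        simpa [Real.coe_toNNReal _ hC0, Real.norm_eq_abs] using hfb (Xn n ω)
      have step1 : (∫ ω, g₂ ((μ[(fun ω' => f (Xn n ω')) | MeasurableSpace.comap (Yn n) inferInstance]) ω, Yn n ω) ∂μ)
          = ∫ ω, (fun ω' => h (Yn n ω')) ω * (μ[(fun ω' => f (Xn n ω')) | MeasurableSpace.comap (Yn n) inferInstance]) ω ∂μ := by
        refine integral_congr_ae ?_
        filter_upwards [hbdd] with ω hω
        simp only [hg₂]
        rw [aux_clamp_eq (by simpa [Real.coe_toNNReal _ hC0] using hω), mul_comm]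
      rw [step1]
      have hmeas_hYn : StronglyMeasurable[MeasurableSpace.comap (Yn n) inferInstance] fun ω => h (Yn n ω) := by
        have hYm : Measurable[MeasurableSpace.comap (Yn n) inferInstance] (Yn n) := measurable_iff_comap_le.mpr le_rfl
        exact (h.continuous.measurable.comp hYm).stronglyMeasurable
      have hprod_int : Integrable ((fun ω => h (Yn n ω)) * fun ω => f (Xn n ω)) μ := by
        refine aux_integrable μ ?_ (C := ‖h‖ * C) fun ω => ?_
        · exact (h.continuous.measurable.comp (hYn n)).mul (f.continuous.measurable.comp (hXn n))
        · simp only [Pi.mul_apply, norm_mul]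
          exact mul_le_mul (h.norm_coe_le_norm _) (hfb _) (norm_nonneg _) (norm_nonneg _)
      have pullout := condExp_mul_of_stronglyMeasurable_left (μ := μ) hmeas_hYn hprod_int hfXn_int
      calc ∫ ω, (fun ω' => h (Yn n ω')) ω * (μ[(fun ω' => f (Xn n ω')) | MeasurableSpace.comap (Yn n) inferInstance]) ω ∂μ
          = ∫ ω, (μ[(fun ω' => h (Yn n ω')) * (fun ω' => f (Xn n ω')) | MeasurableSpace.comap (Yn n) inferInstance]) ω ∂μ :=
            (integral_congr_ae pullout).symm
        _ = ∫ ω, h (Yn n ω) * f (Xn n ω) ∂μ := integral_condExp hm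
        _ = ∫ ω, f (Xn n ω) * h (Yn n ω) ∂μ := by simp_rw [mul_comm]
    rw [funext h3] at h2
    exact tendsto_nhds_unique h1 h2
  -- Step 2: equality of set integrals over `Y ⁻¹' s`
  have hkey2 : ∀ s : Set ΩY, MeasurableSet s →
      ∫ ω in Y ⁻¹' s, g0 ω ∂μ = ∫ ω in Y ⁻¹' s, f (X ω) ∂μ := by
    intro s hs
    set d₁ : Ω → ℝ := fun ω => f (X ω) + C with hd₁
    set d₂ : Ω → ℝ := fun ω => g0 ω + C with hd₂
    have hd₁0 : ∀ ω, 0 ≤ d₁ ω := fun ω => by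
      have := abs_le.mp ((Real.norm_eq_abs _ ▸ hfb (X ω))); simp only [hd₁]; linarith [this.1]
    have hd₂0 : ∀ ω, 0 ≤ d₂ ω := fun ω => by
      have := abs_le.mp ((Real.norm_eq_abs _ ▸ hPf_bound (Y ω)))
      simp only [hd₂, hg0]; linarith [this.1]
    have hd₁m : Measurable d₁ := hfX_meas.add measurable_const
    have hd₂m : Measurable d₂ := hg0_meas.add measurable_const
    have hd₁b : ∀ ω, ‖d₁ ω‖ ≤ 2 * C := fun ω => by
      rw [Real.norm_eq_abs, abs_of_nonneg (hd₁0 ω)]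
      have := abs_le.mp ((Real.norm_eq_abs _ ▸ hfb (X ω))); simp only [hd₁]; linarith [this.2]
    have hd₂b : ∀ ω, ‖d₂ ω‖ ≤ 2 * C := fun ω => by
      rw [Real.norm_eq_abs, abs_of_nonneg (hd₂0 ω)]
      have := abs_le.mp ((Real.norm_eq_abs _ ▸ hPf_bound (Y ω)))
      simp only [hd₂, hg0]; linarith [this.2]
    have hd₁int : Integrable d₁ μ := aux_integrable μ hd₁m hd₁b
    have hd₂int : Integrable d₂ μ := aux_integrable μ hd₂m hd₂b
    set ν₁ : Measure ΩY := (μ.withDensity fun ω => ENNReal.ofReal (d₁ ω)).map Y with hν₁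
    set ν₂ : Measure ΩY := (μ.withDensity fun ω => ENNReal.ofReal (d₂ ω)).map Y with hν₂
    have hfin : ∀ (d : Ω → ℝ), (∀ ω, ‖d ω‖ ≤ 2 * C) →
        IsFiniteMeasure (μ.withDensity fun ω => ENNReal.ofReal (d ω)) := by
      intro d hdb
      refine isFiniteMeasure_withDensity (ne_of_lt ?_)
      calc ∫⁻ ω, ENNReal.ofReal (d ω) ∂μ ≤ ∫⁻ _, ENNReal.ofReal (2 * C) ∂μ :=
            lintegral_mono fun ω => ENNReal.ofReal_le_ofReal
              (le_trans (le_abs_self _) (Real.norm_eq_abs _ ▸ hdb ω))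
        _ < ⊤ := by
            rw [lintegral_const]
            exact ENNReal.mul_lt_top ENNReal.ofReal_lt_top (measure_lt_top μ _)
    haveI := hfin d₁ hd₁b
    haveI := hfin d₂ hd₂b
    haveI : IsFiniteMeasure ν₁ := by rw [hν₁]; exact Measure.isFiniteMeasure_map _ Y
    have hlin : ∀ (d : Ω → ℝ), Measurable d → (∀ ω, 0 ≤ d ω) → Integrable d μ →
        ∀ h : BoundedContinuousFunction ΩY ℝ≥0,
        ∫⁻ y, (h y : ℝ≥0∞) ∂((μ.withDensity fun ω => ENNReal.ofReal (d ω)).map Y)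
          = ENNReal.ofReal (∫ ω, d ω * (h (Y ω) : ℝ) ∂μ) := by
      intro d hdm hd0 hdint h
      have hhm : Measurable fun y : ΩY => (h y : ℝ≥0∞) :=
        measurable_coe_nnreal_ennreal.comp h.continuous.measurable
      rw [lintegral_map hhm hY,
        lintegral_withDensity_eq_lintegral_mul μ hdm.ennreal_ofReal
          (show Measurable fun ω => ((h (Y ω) : ℝ≥0) : ℝ≥0∞) from hhm.comp hY)]
      have hpt : ∀ ω, ((fun ω => ENNReal.ofReal (d ω)) * fun ω => ((h (Y ω) : ℝ≥0) : ℝ≥0∞)) ω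
          = ENNReal.ofReal (d ω * (h (Y ω) : ℝ)) := by
        intro ω
        simp only [Pi.mul_apply]
        rw [ENNReal.ofReal_mul (hd0 ω), ENNReal.ofReal_coe_nnreal]
      rw [lintegral_congr hpt, ← ofReal_integral_eq_lintegral_ofReal]
      · have hb : Integrable (fun ω => (h (Y ω) : ℝ) * d ω) μ :=
          hdint.bdd_mul
            ((measurable_coe_nnreal_real.comp (h.continuous.measurable.comp hY)).aestronglyMeasurable)
            (ae_of_all _ fun ω => (auxCoe h).norm_coe_le_norm (Y ω))
        simpa [mul_comm] using hb
      · exact ae_of_all _ fun ω => mul_nonneg (hd0 ω) (NNReal.coe_nonneg _)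
    have hν_eq : ν₁ = ν₂ := by
      refine ext_of_forall_lintegral_eq_of_IsFiniteMeasure fun h => ?_
      rw [hν₁, hν₂, hlin d₁ hd₁m hd₁0 hd₁int h, hlin d₂ hd₂m hd₂0 hd₂int h]
      congr 1
      have hhY_int : Integrable (fun ω => (h (Y ω) : ℝ)) μ :=
        aux_integrable μ (measurable_coe_nnreal_real.comp (h.continuous.measurable.comp hY))
          (C := ‖auxCoe h‖) fun ω => (auxCoe h).norm_coe_le_norm (Y ω)
      have e₁ : ∫ ω, d₁ ω * (h (Y ω) : ℝ) ∂μ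
          = (∫ ω, f (X ω) * (h (Y ω) : ℝ) ∂μ) + ∫ ω, C * (h (Y ω) : ℝ) ∂μ := by
        simp_rw [hd₁, add_mul]
        exact integral_add (hfX_int.bdd_mul hhY_int.1 (ae_of_all _
            fun ω => (auxCoe h).norm_coe_le_norm (Y ω)) |>.congr
            (ae_of_all _ fun ω => by ring))
          (hhY_int.const_mul C)
      have e₂ : ∫ ω, d₂ ω * (h (Y ω) : ℝ) ∂μ
          = (∫ ω, g0 ω * (h (Y ω) : ℝ) ∂μ) + ∫ ω, C * (h (Y ω) : ℝ) ∂μ := by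
        simp_rw [hd₂, add_mul]
        exact integral_add (hg0_int.bdd_mul hhY_int.1 (ae_of_all _
            fun ω => (auxCoe h).norm_coe_le_norm (Y ω)) |>.congr
            (ae_of_all _ fun ω => by ring))
          (hhY_int.const_mul C)
      rw [e₁, e₂]
      have := hkey (auxCoe h)
      simp only [auxCoe_apply] at this
      rw [this]
    -- evaluate on the set `s`
    have hval : ∀ (d : Ω → ℝ), Measurable d → (∀ ω, 0 ≤ d ω) → Integrable d μ →
        ((μ.withDensity fun ω => ENNReal.ofReal (d ω)).map Y) s
          = ENNReal.ofReal (∫ ω in Y ⁻¹' s, d ω ∂μ) := by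
      intro d hdm hd0 hdint
      rw [Measure.map_apply hY hs, withDensity_apply _ (hY hs),
        ← ofReal_integral_eq_lintegral_ofReal hdint.restrict
          (ae_of_all _ fun ω => hd0 ω)]
    have hseq : ENNReal.ofReal (∫ ω in Y ⁻¹' s, d₁ ω ∂μ)
        = ENNReal.ofReal (∫ ω in Y ⁻¹' s, d₂ ω ∂μ) := by
      rw [← hval d₁ hd₁m hd₁0 hd₁int, ← hval d₂ hd₂m hd₂0 hd₂int, ← hν₁, ← hν₂, hν_eq]
    have hseq' : ∫ ω in Y ⁻¹' s, d₁ ω ∂μ = ∫ ω in Y ⁻¹' s, d₂ ω ∂μ :=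
      (ENNReal.ofReal_eq_ofReal_iff
        (setIntegral_nonneg (hY hs) fun ω _ => hd₁0 ω)
        (setIntegral_nonneg (hY hs) fun ω _ => hd₂0 ω)).mp hseq
    have ea : ∫ ω in Y ⁻¹' s, d₁ ω ∂μ
        = (∫ ω in Y ⁻¹' s, f (X ω) ∂μ) + ∫ ω in Y ⁻¹' s, C ∂μ := by
      simp_rw [hd₁]
      exact integral_add hfX_int.restrict (integrable_const C)
    have eb : ∫ ω in Y ⁻¹' s, d₂ ω ∂μ
        = (∫ ω in Y ⁻¹' s, g0 ω ∂μ) + ∫ ω in Y ⁻¹' s, C ∂μ := by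
      simp_rw [hd₂]
      exact integral_add hg0_int.restrict (integrable_const C)
    rw [ea, eb] at hseq'
    linarith
  -- Step 3: conclude via uniqueness of conditional expectation
  have hm : MeasurableSpace.comap Y inferInstance ≤ _ := hY.comap_le
  refine (ae_eq_condExp_of_forall_setIntegral_eq hm hfX_int ?_ ?_ ?_).symm
  · intro s _ _
    exact hg0_int.integrableOn
  · rintro s ⟨t, ht, rfl⟩ _
    exact hkey2 t ht
  · refine StronglyMeasurable.aestronglyMeasurable ?_
    have hYm : Measurable[MeasurableSpace.comap Y inferInstance] Y :=
      measurable_iff_comap_le.mpr le_rfl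
    exact ((hPmeas f).comp hYm).stronglyMeasurable
end
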